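/- arXiv:2007.14925 — 4 statements merged into one kernel-verified Lean document; each statement's English description precedes it below -/
import Mathlib

section
/- (a) If f, g : Ω_D → ℍ are slice regular, then f⊙g is slice regular. (b) If f : Ω_D → ℍ is a slice preserving slice function, then for all slice functions g, h : Ω_D → ℍ one has f⊙g = g⊙f, (f⊙g)⊙h = f⊙(g⊙h), (g⊙f)⊙h = g⊙(f⊙h), and (g⊙h)⊙f = g⊙(h⊙f); in particular the slice preserving slice regular functions lie in the center of the real algebra of slice functions with the slice tensor product. -/
noncomputable section

abbrev ℍ := Quaternion ℝ

/-- The sphere of quaternionic imaginary units. -/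
def Sph : Set ℍ := {J | J ^ 2 = -1}

/-- The complex slice `ℂ_J = {a + b J : a b : ℝ}`. -/
def CJ (J : ℍ) : Set ℍ := {x | ∃ a b : ℝ, x = (a : ℍ) + (b : ℍ) * J}

variable {n : ℕ}

/-- Conjugation of the `h`-th complex coordinate. -/
def conjCoord (h : Fin n) (z : Fin n → ℂ) : Fin n → ℂ :=
  Function.update z h (starRingEnd ℂ (z h))

/-- Quaternionic conjugation of the coordinates with index in `H`. -/
def conjQ (H : Finset (Fin n)) (x : Fin n → ℍ) : Fin n → ℍ :=
  fun h => if h ∈ H then star (x h) else x h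

/-- Ordered product `J_K` of the values of `J` over `K`, in increasing index order. -/
def JK (J : Fin n → ℍ) (K : Finset (Fin n)) : ℍ :=
  ((K.sort (· ≤ ·)).map J).prod

/-- The complex point with coordinates `α h + i β h`. -/
def zOf (α β : Fin n → ℝ) : Fin n → ℂ :=
  fun h => (α h : ℂ) + (β h : ℂ) * Complex.I

/-- The quaternionic point with coordinates `α h + β h * J h`. -/
def ptOf (α β : Fin n → ℝ) (J : Fin n → ℍ) : Fin n → ℍ :=
  fun h => (α h : ℍ) + (β h : ℍ) * J h

/-- The circularization `Ω_D` of `D ⊆ ℂⁿ` in `ℍⁿ`. -/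
def OmegaD (D : Set (Fin n → ℂ)) : Set (Fin n → ℍ) :=
  {x | ∃ α β : Fin n → ℝ, ∃ J : Fin n → ℍ,
    (∀ h, J h ∈ Sph) ∧ x = ptOf α β J ∧ zOf α β ∈ D}

/-- Invariance of `D` under all coordinatewise complex conjugations. -/
def ConjInv (D : Set (Fin n → ℂ)) : Prop :=
  ∀ h : Fin n, ∀ z ∈ D, conjCoord h z ∈ D

/-- Stem function condition for a family `F = (F_K)`. -/
def IsStem (D : Set (Fin n → ℂ)) (F : Finset (Fin n) → (Fin n → ℂ) → ℍ) : Prop :=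
  ∀ (K : Finset (Fin n)) (h : Fin n), ∀ z ∈ D,
    F K (conjCoord h z) = (if h ∈ K then -1 else 1) * F K z

/-- `f` is the slice function induced by the stem function `F` on `Ω_D`. -/
def Induces (D : Set (Fin n → ℂ)) (F : Finset (Fin n) → (Fin n → ℂ) → ℍ)
    (f : (Fin n → ℍ) → ℍ) : Prop :=
  ∀ (α β : Fin n → ℝ) (J : Fin n → ℍ), (∀ h, J h ∈ Sph) → zOf α β ∈ D →
    f (ptOf α β J) = ∑ K : Finset (Fin n), JK J K * F K (zOf α β)

/-- `f` is a slice function on `Ω_D`. -/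
def IsSlice (D : Set (Fin n → ℂ)) (f : (Fin n → ℍ) → ℍ) : Prop :=
  ∃ F, IsStem D F ∧ Induces D F f

/-- Each component of the stem function is of class `C¹` on `D`. -/
def StemC1 (D : Set (Fin n → ℂ)) (F : Finset (Fin n) → (Fin n → ℂ) → ℍ) : Prop :=
  ∀ K, ContDiffOn ℝ 1 (F K) D

/-- Holomorphy (Cauchy–Riemann system) of a stem function. -/
def StemHolo (D : Set (Fin n → ℂ)) (F : Finset (Fin n) → (Fin n → ℂ) → ℍ) : Prop :=
  ∀ z ∈ D, ∀ h : Fin n, ∀ K : Finset (Fin n), h ∉ K →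
    fderiv ℝ (F K) z (Pi.single h 1) =
      fderiv ℝ (F (insert h K)) z (Pi.single h Complex.I) ∧
    fderiv ℝ (F K) z (Pi.single h Complex.I) =
      -fderiv ℝ (F (insert h K)) z (Pi.single h 1)

/-- `f` is a slice regular function on `Ω_D`. -/
def IsSliceRegular (D : Set (Fin n → ℂ)) (f : (Fin n → ℍ) → ℍ) : Prop :=
  ∃ F, IsStem D F ∧ StemC1 D F ∧ StemHolo D F ∧ Induces D F f

/-- Pointwise product of stem functions associated with `σ`. -/
def SP (σ : Finset (Fin n) → Finset (Fin n) → ℝ)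
    (F G : Finset (Fin n) → (Fin n → ℂ) → ℍ) :
    Finset (Fin n) → (Fin n → ℂ) → ℍ :=
  fun K z => ∑ H : Finset (Fin n), ∑ L : Finset (Fin n),
    if symmDiff H L = K then σ H L • (F H z * G L z) else 0

/-- The tensor-product sign function `σ_⊗(K,H) = (-1)^{|K∩H|}`. -/
def sigmaT : Finset (Fin n) → Finset (Fin n) → ℝ :=
  fun K H => (-1 : ℝ) ^ (K ∩ H).card

/-- The tensor (slice) product of stem functions. -/
def SPT (F G : Finset (Fin n) → (Fin n → ℂ) → ℍ) :
    Finset (Fin n) → (Fin n → ℂ) → ℍ := SP sigmaT F G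

/-- The stem function `∂_h F`. -/
def Dplus (F : Finset (Fin n) → (Fin n → ℂ) → ℍ) (h : Fin n) :
    Finset (Fin n) → (Fin n → ℂ) → ℍ :=
  fun K z => (2 : ℝ)⁻¹ • (fderiv ℝ (F K) z (Pi.single h 1) +
    ((-1 : ℝ) ^ (K ∩ {h}).card) •
      fderiv ℝ (F (symmDiff K {h})) z (Pi.single h Complex.I))

/-- The stem function `∂̄_h F`. -/
def Dminus (F : Finset (Fin n) → (Fin n → ℂ) → ℍ) (h : Fin n) :
    Finset (Fin n) → (Fin n → ℂ) → ℍ :=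
  fun K z => (2 : ℝ)⁻¹ • (fderiv ℝ (F K) z (Pi.single h 1) -
    ((-1 : ℝ) ^ (K ∩ {h}).card) •
      fderiv ℝ (F (symmDiff K {h})) z (Pi.single h Complex.I))

/-- The ordered monomial function `x ↦ x^ℓ a = x₁^{ℓ₁} ⋯ xₙ^{ℓₙ} a`. -/
def mono (ℓ : Fin n → ℕ) (a : ℍ) (x : Fin n → ℍ) : ℍ :=
  (List.ofFn fun h => x h ^ ℓ h).prod * a

/-- The coordinatewise map `φ_J : ℂⁿ → (ℂ_J)ⁿ ⊆ ℍⁿ`. -/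
def phiJ (J : ℍ) (z : Fin n → ℂ) : Fin n → ℍ :=
  fun h => ((z h).re : ℍ) + ((z h).im : ℍ) * J

/-- The standard basis vector `e_K` of `ℝ^{𝒫(n)}`. -/
def eB (K : Finset (Fin n)) : Finset (Fin n) → ℝ := Pi.single K 1

/-- The `Δ`-product on `ℝ^{𝒫(n)}` associated with `σ`. -/
def deltaMulR (σ : Finset (Fin n) → Finset (Fin n) → ℝ)
    (v w : Finset (Fin n) → ℝ) : Finset (Fin n) → ℝ :=
  fun K => ∑ H : Finset (Fin n), ∑ L : Finset (Fin n),
    if symmDiff H L = K then σ H L * v H * w L else 0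


section Stmt14Aux

variable {n : ℕ}

lemma aux_np_sq (c : ℕ) : ((-1:ℝ))^c * ((-1:ℝ))^c = 1 := by
  rw [← pow_add]
  exact Even.neg_one_pow ⟨c, rfl⟩

lemma aux_card_symmDiff (A B : Finset (Fin n)) :
    (symmDiff A B).card + 2 * (A ∩ B).card = A.card + B.card := by
  have hd : Disjoint (symmDiff A B) (A ∩ B) := by
    have := disjoint_symmDiff_inf A B
    simpa [Finset.inf_eq_inter] using this
  have hu : symmDiff A B ∪ (A ∩ B) = A ∪ B := by
    have := symmDiff_sup_inf (a := A) (b := B)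
    simpa [Finset.sup_eq_union, Finset.inf_eq_inter] using this
  have h1 : (symmDiff A B).card + (A ∩ B).card = (A ∪ B).card := by
    rw [← Finset.card_union_of_disjoint hd, hu]
  have h2 := Finset.card_union_add_card_inter A B
  omega

lemma aux_np_symmDiff (A B : Finset (Fin n)) :
    ((-1:ℝ))^(symmDiff A B).card = (-1)^A.card * (-1)^B.card := by
  have key := aux_card_symmDiff A B
  rw [← pow_add, ← key, pow_add, pow_mul]
  norm_num

lemma aux_inter_symmDiff_right (A B C : Finset (Fin n)) :
    (symmDiff A B) ∩ C = symmDiff (A ∩ C) (B ∩ C) := by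
  have := inf_symmDiff_distrib_right (a := A) (b := B) (c := C)
  simpa [Finset.inf_eq_inter] using this

lemma aux_inter_symmDiff_left (A B C : Finset (Fin n)) :
    A ∩ (symmDiff B C) = symmDiff (A ∩ B) (A ∩ C) := by
  have := inf_symmDiff_distrib_left (a := A) (b := B) (c := C)
  simpa [Finset.inf_eq_inter] using this

lemma aux_sigmaT_assoc (A B C : Finset (Fin n)) :
    sigmaT A B * sigmaT (symmDiff A B) C = sigmaT B C * sigmaT A (symmDiff B C) := by
  unfold sigmaT
  rw [aux_inter_symmDiff_right, aux_inter_symmDiff_left, aux_np_symmDiff, aux_np_symmDiff]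
  ring

lemma aux_sigmaT_comm (A B : Finset (Fin n)) : sigmaT A B = sigmaT B A := by
  unfold sigmaT
  rw [Finset.inter_comm]

lemma aux_card_inter_singleton_eq {H L : Finset (Fin n)} {h : Fin n} (hm : h ∈ H ↔ h ∈ L) :
    (({h} : Finset (Fin n)) ∩ L).card = (H ∩ {h}).card := by
  by_cases hL : h ∈ L
  · rw [Finset.singleton_inter_of_mem hL, Finset.inter_singleton_of_mem (hm.2 hL)]
  · rw [Finset.singleton_inter_of_notMem hL,
      Finset.inter_singleton_of_notMem (fun hh => hL (hm.1 hh))]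

lemma aux_sign_step_left {H L : Finset (Fin n)} {h : Fin n} (hm : h ∈ H ↔ h ∈ L) :
    sigmaT (symmDiff H {h}) L * (-1:ℝ)^(H ∩ {h}).card = sigmaT H L := by
  unfold sigmaT
  rw [aux_inter_symmDiff_right, aux_np_symmDiff, aux_card_inter_singleton_eq hm,
    mul_assoc, aux_np_sq, mul_one]

lemma aux_sign_step_right {H L : Finset (Fin n)} {h : Fin n} (hm : h ∈ H ↔ h ∈ L) :
    sigmaT H (symmDiff L {h}) * (-1:ℝ)^(L ∩ {h}).card = sigmaT H L := by
  unfold sigmaT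
  rw [aux_inter_symmDiff_left, aux_np_symmDiff]
  have hcard : (H ∩ ({h} : Finset (Fin n))).card = (L ∩ {h}).card := by
    by_cases hH : h ∈ H
    · rw [Finset.inter_singleton_of_mem hH, Finset.inter_singleton_of_mem (hm.1 hH)]
    · rw [Finset.inter_singleton_of_notMem hH,
        Finset.inter_singleton_of_notMem (fun hh => hH (hm.2 hh))]
  rw [hcard, mul_assoc, aux_np_sq, mul_one]

lemma aux_symmDiff_singleton_of_not_mem {H : Finset (Fin n)} {h : Fin n} (hm : h ∉ H) :
    symmDiff H {h} = insert h H := by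
  ext a
  by_cases ha : a = h <;> simp [Finset.mem_symmDiff, ha, hm] <;> tauto

lemma aux_symmDiff_singleton_of_mem {H : Finset (Fin n)} {h : Fin n} (hm : h ∈ H) :
    symmDiff H {h} = H.erase h := by
  ext a
  by_cases ha : a = h <;> simp [Finset.mem_symmDiff, ha, hm] <;> tauto

lemma aux_CRi {D : Set (Fin n → ℂ)} {F : Finset (Fin n) → (Fin n → ℂ) → ℍ}
    (hFh : StemHolo D F) {z : Fin n → ℂ} (hz : z ∈ D) (h : Fin n) (H : Finset (Fin n)) :
    fderiv ℝ (F (symmDiff H {h})) z (Pi.single h Complex.I)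
      = ((-1:ℝ)^(H ∩ {h}).card) • fderiv ℝ (F H) z (Pi.single h 1) := by
  by_cases hm : h ∈ H
  · rw [aux_symmDiff_singleton_of_mem hm, Finset.inter_singleton_of_mem hm,
      Finset.card_singleton, pow_one]
    have h2 := (hFh z hz h (H.erase h) (Finset.notMem_erase h H)).2
    rw [Finset.insert_erase hm] at h2
    rw [h2, neg_one_smul]
  · rw [aux_symmDiff_singleton_of_not_mem hm, Finset.inter_singleton_of_notMem hm,
      Finset.card_empty, pow_zero, one_smul]
    exact ((hFh z hz h H hm).1).symm

lemma aux_CR1 {D : Set (Fin n → ℂ)} {F : Finset (Fin n) → (Fin n → ℂ) → ℍ}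
    (hFh : StemHolo D F) {z : Fin n → ℂ} (hz : z ∈ D) (h : Fin n) (H : Finset (Fin n)) :
    fderiv ℝ (F (symmDiff H {h})) z (Pi.single h 1)
      = -(((-1:ℝ)^(H ∩ {h}).card) • fderiv ℝ (F H) z (Pi.single h Complex.I)) := by
  by_cases hm : h ∈ H
  · rw [aux_symmDiff_singleton_of_mem hm, Finset.inter_singleton_of_mem hm,
      Finset.card_singleton, pow_one, neg_one_smul, neg_neg]
    have h2 := (hFh z hz h (H.erase h) (Finset.notMem_erase h H)).1
    rw [Finset.insert_erase hm] at h2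
    exact h2
  · rw [aux_symmDiff_singleton_of_not_mem hm, Finset.inter_singleton_of_notMem hm,
      Finset.card_empty, pow_zero, one_smul]
    have h2 := (hFh z hz h H hm).2
    rw [h2, neg_neg]

lemma aux_sum_reindex_symmDiff (c : Finset (Fin n)) (f : Finset (Fin n) → ℍ) :
    ∑ A : Finset (Fin n), f A = ∑ A : Finset (Fin n), f (symmDiff A c) :=
  (Fintype.sum_equiv (Function.Involutive.toPerm _ (symmDiff_left_involutive c))
    (fun A => f (symmDiff A c)) f (fun _ => rfl)).symm

lemma aux_symmDiff_right_comm (A B C : Finset (Fin n)) :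
    symmDiff (symmDiff A B) C = symmDiff (symmDiff A C) B := by
  rw [symmDiff_assoc, symmDiff_assoc, symmDiff_comm B C]

lemma aux_cond_shift_left {H L K : Finset (Fin n)} (h : Fin n) :
    (symmDiff (symmDiff H {h}) L = symmDiff K {h}) ↔ symmDiff H L = K := by
  rw [aux_symmDiff_right_comm]
  exact (symmDiff_left_injective _).eq_iff

lemma aux_cond_shift_right {H L K : Finset (Fin n)} (h : Fin n) :
    (symmDiff H (symmDiff L {h}) = symmDiff K {h}) ↔ symmDiff H L = K := by
  rw [← symmDiff_assoc]
  exact (symmDiff_left_injective _).eq_iff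

lemma aux_mem_iff_of_symmDiff {H L K : Finset (Fin n)} {h : Fin n} (hc : symmDiff H L = K)
    (hK : h ∉ K) : h ∈ H ↔ h ∈ L := by
  subst hc
  simp only [Finset.mem_symmDiff] at hK
  tauto

lemma aux_ite_smul_add_zero {c : Prop} [Decidable c] (s : ℝ) (a b : ℍ) :
    (if c then s • (a + b) else 0) = (if c then s • a else 0) + (if c then s • b else 0) := by
  split <;> simp [smul_add]

lemma aux_neg_sum_sum (f : Finset (Fin n) → Finset (Fin n) → ℍ) :
    -∑ H : Finset (Fin n), ∑ L : Finset (Fin n), f H L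
      = ∑ H : Finset (Fin n), ∑ L : Finset (Fin n), -f H L := by
  simp [← Finset.sum_neg_distrib]

lemma aux_fderiv_SPT {D : Set (Fin n → ℂ)} (hD : IsOpen D)
    {F G : Finset (Fin n) → (Fin n → ℂ) → ℍ}
    (hF : StemC1 D F) (hG : StemC1 D G) {z : Fin n → ℂ} (hz : z ∈ D)
    (K : Finset (Fin n)) (v : Fin n → ℂ) :
    fderiv ℝ (SPT F G K) z v = ∑ H : Finset (Fin n), ∑ L : Finset (Fin n),
      (if symmDiff H L = K then sigmaT H L •
        (fderiv ℝ (F H) z v * G L z + F H z * fderiv ℝ (G L) z v) else 0) := by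
  have hmem : D ∈ nhds z := hD.mem_nhds hz
  have dF : ∀ H, DifferentiableAt ℝ (F H) z :=
    fun H => ((hF H).contDiffAt hmem).differentiableAt one_ne_zero
  have dG : ∀ L, DifferentiableAt ℝ (G L) z :=
    fun L => ((hG L).contDiffAt hmem).differentiableAt one_ne_zero
  have dterm : ∀ H L : Finset (Fin n), DifferentiableAt ℝ
      (fun w => if symmDiff H L = K then sigmaT H L • (F H w * G L w) else 0) z := by
    intro H L
    by_cases hc : symmDiff H L = K
    · simp only [if_pos hc]
      exact ((dF H).mul (dG L)).const_smul (sigmaT H L)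
    · simp only [if_neg hc]
      exact differentiableAt_const 0
  have dinner : ∀ H : Finset (Fin n), DifferentiableAt ℝ
      (fun w => ∑ L : Finset (Fin n),
        if symmDiff H L = K then sigmaT H L • (F H w * G L w) else 0) z :=
    fun H => DifferentiableAt.fun_sum (fun L _ => dterm H L)
  rw [show SPT F G K = (fun w => ∑ H : Finset (Fin n), ∑ L : Finset (Fin n),
      if symmDiff H L = K then sigmaT H L • (F H w * G L w) else 0) from rfl,
    fderiv_fun_sum (fun H _ => dinner H), ContinuousLinearMap.sum_apply]
  refine Finset.sum_congr rfl (fun H _ => ?_)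
  rw [fderiv_fun_sum (fun L _ => dterm H L), ContinuousLinearMap.sum_apply]
  refine Finset.sum_congr rfl (fun L _ => ?_)
  by_cases hc : symmDiff H L = K
  · simp only [if_pos hc]
    rw [fderiv_fun_const_smul (f := fun y => F H y * G L y) ((dF H).mul (dG L)), ContinuousLinearMap.smul_apply,
      fderiv_fun_mul' (dF H) (dG L)]
    simp only [ContinuousLinearMap.add_apply, ContinuousLinearMap.smul_apply,
      ContinuousLinearMap.smulRight_apply, smul_eq_mul, op_smul_eq_mul]
    rw [add_comm]
  · simp only [if_neg hc]
    simp [fderiv_const]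

lemma aux_holo_SPT {D : Set (Fin n → ℂ)} (hD : IsOpen D)
    {F G : Finset (Fin n) → (Fin n → ℂ) → ℍ}
    (hF1 : StemC1 D F) (hG1 : StemC1 D G)
    (hFh : StemHolo D F) (hGh : StemHolo D G) : StemHolo D (SPT F G) := by
  intro z hz h K hK
  have hins : insert h K = symmDiff K {h} := (aux_symmDiff_singleton_of_not_mem hK).symm
  rw [aux_fderiv_SPT hD hF1 hG1 hz, aux_fderiv_SPT hD hF1 hG1 hz,
    aux_fderiv_SPT hD hF1 hG1 hz, aux_fderiv_SPT hD hF1 hG1 hz, hins]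
  constructor
  · simp only [aux_ite_smul_add_zero, Finset.sum_add_distrib]
    congr 1
    · conv_rhs => rw [aux_sum_reindex_symmDiff {h}]
      refine Finset.sum_congr rfl fun H _ => Finset.sum_congr rfl fun L _ => ?_
      by_cases hc : symmDiff H L = K
      · rw [if_pos hc, if_pos ((aux_cond_shift_left h).mpr hc)]
        rw [aux_CRi hFh hz h H, smul_mul_assoc, smul_smul,
          aux_sign_step_left (aux_mem_iff_of_symmDiff hc hK)]
      · rw [if_neg hc, if_neg (fun hcc => hc ((aux_cond_shift_left h).mp hcc))]
    · refine Finset.sum_congr rfl fun H _ => ?_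
      conv_rhs => rw [aux_sum_reindex_symmDiff {h}]
      refine Finset.sum_congr rfl fun L _ => ?_
      by_cases hc : symmDiff H L = K
      · rw [if_pos hc, if_pos ((aux_cond_shift_right h).mpr hc)]
        rw [aux_CRi hGh hz h L, mul_smul_comm, smul_smul,
          aux_sign_step_right (aux_mem_iff_of_symmDiff hc hK)]
      · rw [if_neg hc, if_neg (fun hcc => hc ((aux_cond_shift_right h).mp hcc))]
  · simp only [aux_ite_smul_add_zero, Finset.sum_add_distrib, neg_add]
    congr 1
    · rw [aux_neg_sum_sum]
      conv_rhs => rw [aux_sum_reindex_symmDiff {h}]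
      refine Finset.sum_congr rfl fun H _ => Finset.sum_congr rfl fun L _ => ?_
      by_cases hc : symmDiff H L = K
      · rw [if_pos hc, if_pos ((aux_cond_shift_left h).mpr hc)]
        rw [aux_CR1 hFh hz h H, neg_mul, smul_neg, neg_neg, smul_mul_assoc, smul_smul,
          aux_sign_step_left (aux_mem_iff_of_symmDiff hc hK)]
      · rw [if_neg hc, if_neg (fun hcc => hc ((aux_cond_shift_left h).mp hcc)), neg_zero]
    · rw [aux_neg_sum_sum]
      refine Finset.sum_congr rfl fun H _ => ?_
      conv_rhs => rw [aux_sum_reindex_symmDiff {h}]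
      refine Finset.sum_congr rfl fun L _ => ?_
      by_cases hc : symmDiff H L = K
      · rw [if_pos hc, if_pos ((aux_cond_shift_right h).mpr hc)]
        rw [aux_CR1 hGh hz h L, mul_neg, smul_neg, neg_neg, mul_smul_comm, smul_smul,
          aux_sign_step_right (aux_mem_iff_of_symmDiff hc hK)]
      · rw [if_neg hc, if_neg (fun hcc => hc ((aux_cond_shift_right h).mp hcc)), neg_zero]

lemma aux_stem_SPT {D : Set (Fin n → ℂ)} {F G : Finset (Fin n) → (Fin n → ℂ) → ℍ}
    (hF : IsStem D F) (hG : IsStem D G) : IsStem D (SPT F G) := by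
  intro K h z hz
  unfold SPT SP
  rw [Finset.mul_sum]
  refine Finset.sum_congr rfl fun H _ => ?_
  rw [Finset.mul_sum]
  refine Finset.sum_congr rfl fun L _ => ?_
  by_cases hc : symmDiff H L = K
  · rw [if_pos hc, if_pos hc, hF H h z hz, hG L h z hz]
    subst hc
    by_cases h1 : h ∈ H <;> by_cases h2 : h ∈ L <;>
      simp [Finset.mem_symmDiff, h1, h2, neg_mul, mul_neg, one_mul, neg_neg, smul_neg]
  · rw [if_neg hc, if_neg hc, mul_zero]

lemma aux_c1_SPT {D : Set (Fin n → ℂ)} {F G : Finset (Fin n) → (Fin n → ℂ) → ℍ}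
    (hF : StemC1 D F) (hG : StemC1 D G) : StemC1 D (SPT F G) := by
  intro K
  show ContDiffOn ℝ 1 (fun z => ∑ H : Finset (Fin n), ∑ L : Finset (Fin n),
    if symmDiff H L = K then sigmaT H L • (F H z * G L z) else 0) D
  apply ContDiffOn.sum
  intro H _
  apply ContDiffOn.sum
  intro L _
  by_cases hc : symmDiff H L = K
  · simp only [if_pos hc]
    exact ((hF H).mul (hG L)).const_smul _
  · simp only [if_neg hc]
    exact contDiffOn_const

lemma aux_comm_SPT {D : Set (Fin n → ℂ)} {F G : Finset (Fin n) → (Fin n → ℂ) → ℍ}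
    (hreal : ∀ K : Finset (Fin n), ∀ z ∈ D, ∃ r : ℝ, F K z = (r : ℍ))
    {z : Fin n → ℂ} (hz : z ∈ D) (K : Finset (Fin n)) :
    SPT F G K z = SPT G F K z := by
  unfold SPT SP
  rw [Finset.sum_comm]
  refine Finset.sum_congr rfl fun a _ => Finset.sum_congr rfl fun b _ => ?_
  obtain ⟨r, hr⟩ := hreal b z hz
  rw [symmDiff_comm b a, aux_sigmaT_comm b a, hr, Quaternion.coe_commutes]

lemma aux_collapse_P (t : Finset (Fin n) → Finset (Fin n) → ℍ) :
    (∑ P : Finset (Fin n), ∑ B : Finset (Fin n), ∑ C : Finset (Fin n),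
      if symmDiff B C = P then t B C else 0)
    = ∑ B : Finset (Fin n), ∑ C : Finset (Fin n), t B C := by
  rw [Finset.sum_comm]
  refine Finset.sum_congr rfl fun B _ => ?_
  rw [Finset.sum_comm]
  refine Finset.sum_congr rfl fun C _ => ?_
  simp

lemma aux_SPT_expand_left (F G H : Finset (Fin n) → (Fin n → ℂ) → ℍ)
    (K : Finset (Fin n)) (z : Fin n → ℂ) :
    SPT (SPT F G) H K z = ∑ A : Finset (Fin n), ∑ B : Finset (Fin n), ∑ C : Finset (Fin n),
      if symmDiff (symmDiff A B) C = K
      then (sigmaT A B * sigmaT (symmDiff A B) C) • (F A z * G B z * H C z) else 0 := by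
  have step : ∀ P C : Finset (Fin n),
      (if symmDiff P C = K then sigmaT P C • (SPT F G P z * H C z) else 0)
      = ∑ A : Finset (Fin n), ∑ B : Finset (Fin n),
          if symmDiff A B = P then
            (if symmDiff (symmDiff A B) C = K
             then (sigmaT A B * sigmaT (symmDiff A B) C) • (F A z * G B z * H C z) else 0)
          else 0 := by
    intro P C
    by_cases hc : symmDiff P C = K
    · rw [if_pos hc]
      unfold SPT SP
      rw [Finset.sum_mul, Finset.smul_sum]
      refine Finset.sum_congr rfl fun A _ => ?_
      rw [Finset.sum_mul, Finset.smul_sum]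
      refine Finset.sum_congr rfl fun B _ => ?_
      by_cases hp : symmDiff A B = P
      · subst hp
        rw [if_pos rfl, if_pos hc, smul_mul_assoc, smul_smul,
          mul_comm (sigmaT (symmDiff A B) C)]
        simp
      · rw [if_neg hp, if_neg hp, zero_mul, smul_zero]
    · rw [if_neg hc]
      symm
      refine Finset.sum_eq_zero fun A _ => Finset.sum_eq_zero fun B _ => ?_
      by_cases hp : symmDiff A B = P
      · subst hp
        rw [if_pos rfl, if_neg hc]
      · rw [if_neg hp]
  calc SPT (SPT F G) H K z
      = ∑ P : Finset (Fin n), ∑ C : Finset (Fin n),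
          if symmDiff P C = K then sigmaT P C • (SPT F G P z * H C z) else 0 := rfl
    _ = ∑ P : Finset (Fin n), ∑ C : Finset (Fin n), ∑ A : Finset (Fin n), ∑ B : Finset (Fin n),
          if symmDiff A B = P then
            (if symmDiff (symmDiff A B) C = K
             then (sigmaT A B * sigmaT (symmDiff A B) C) • (F A z * G B z * H C z) else 0)
          else 0 :=
        Finset.sum_congr rfl fun P _ => Finset.sum_congr rfl fun C _ => step P C
    _ = ∑ C : Finset (Fin n), ∑ P : Finset (Fin n), ∑ A : Finset (Fin n), ∑ B : Finset (Fin n),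
          if symmDiff A B = P then
            (if symmDiff (symmDiff A B) C = K
             then (sigmaT A B * sigmaT (symmDiff A B) C) • (F A z * G B z * H C z) else 0)
          else 0 := Finset.sum_comm
    _ = ∑ C : Finset (Fin n), ∑ A : Finset (Fin n), ∑ B : Finset (Fin n),
          (if symmDiff (symmDiff A B) C = K
             then (sigmaT A B * sigmaT (symmDiff A B) C) • (F A z * G B z * H C z) else 0) :=
        Finset.sum_congr rfl fun C _ => aux_collapse_P _
    _ = ∑ A : Finset (Fin n), ∑ C : Finset (Fin n), ∑ B : Finset (Fin n),
          (if symmDiff (symmDiff A B) C = K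
             then (sigmaT A B * sigmaT (symmDiff A B) C) • (F A z * G B z * H C z) else 0) :=
        Finset.sum_comm
    _ = ∑ A : Finset (Fin n), ∑ B : Finset (Fin n), ∑ C : Finset (Fin n),
          (if symmDiff (symmDiff A B) C = K
             then (sigmaT A B * sigmaT (symmDiff A B) C) • (F A z * G B z * H C z) else 0) :=
        Finset.sum_congr rfl fun A _ => Finset.sum_comm

lemma aux_SPT_expand_right (F G H : Finset (Fin n) → (Fin n → ℂ) → ℍ)
    (K : Finset (Fin n)) (z : Fin n → ℂ) :
    SPT F (SPT G H) K z = ∑ A : Finset (Fin n), ∑ B : Finset (Fin n), ∑ C : Finset (Fin n),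
      if symmDiff A (symmDiff B C) = K
      then (sigmaT B C * sigmaT A (symmDiff B C)) • (F A z * (G B z * H C z)) else 0 := by
  have step : ∀ A P : Finset (Fin n),
      (if symmDiff A P = K then sigmaT A P • (F A z * SPT G H P z) else 0)
      = ∑ B : Finset (Fin n), ∑ C : Finset (Fin n),
          if symmDiff B C = P then
            (if symmDiff A (symmDiff B C) = K
             then (sigmaT B C * sigmaT A (symmDiff B C)) • (F A z * (G B z * H C z)) else 0)
          else 0 := by
    intro A P
    by_cases hc : symmDiff A P = K
    · rw [if_pos hc]
      unfold SPT SP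
      rw [Finset.mul_sum, Finset.smul_sum]
      refine Finset.sum_congr rfl fun B _ => ?_
      rw [Finset.mul_sum, Finset.smul_sum]
      refine Finset.sum_congr rfl fun C _ => ?_
      by_cases hp : symmDiff B C = P
      · subst hp
        rw [if_pos rfl, if_pos hc, mul_smul_comm, smul_smul,
          mul_comm (sigmaT A (symmDiff B C))]
        simp
      · rw [if_neg hp, if_neg hp, mul_zero, smul_zero]
    · rw [if_neg hc]
      symm
      refine Finset.sum_eq_zero fun B _ => Finset.sum_eq_zero fun C _ => ?_
      by_cases hp : symmDiff B C = P
      · subst hp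
        rw [if_pos rfl, if_neg hc]
      · rw [if_neg hp]
  calc SPT F (SPT G H) K z
      = ∑ A : Finset (Fin n), ∑ P : Finset (Fin n),
          if symmDiff A P = K then sigmaT A P • (F A z * SPT G H P z) else 0 := rfl
    _ = ∑ A : Finset (Fin n), ∑ P : Finset (Fin n), ∑ B : Finset (Fin n), ∑ C : Finset (Fin n),
          if symmDiff B C = P then
            (if symmDiff A (symmDiff B C) = K
             then (sigmaT B C * sigmaT A (symmDiff B C)) • (F A z * (G B z * H C z)) else 0)
          else 0 :=
        Finset.sum_congr rfl fun A _ => Finset.sum_congr rfl fun P _ => step A P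
    _ = ∑ A : Finset (Fin n), ∑ B : Finset (Fin n), ∑ C : Finset (Fin n),
          (if symmDiff A (symmDiff B C) = K
             then (sigmaT B C * sigmaT A (symmDiff B C)) • (F A z * (G B z * H C z)) else 0) :=
        Finset.sum_congr rfl fun A _ => aux_collapse_P _

lemma aux_SPT_assoc (F G H : Finset (Fin n) → (Fin n → ℂ) → ℍ)
    (K : Finset (Fin n)) (z : Fin n → ℂ) :
    SPT (SPT F G) H K z = SPT F (SPT G H) K z := by
  rw [aux_SPT_expand_left, aux_SPT_expand_right]
  refine Finset.sum_congr rfl fun A _ => Finset.sum_congr rfl fun B _ =>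
    Finset.sum_congr rfl fun C _ => ?_
  rw [symmDiff_assoc, mul_assoc (F A z), aux_sigmaT_assoc]

end Stmt14Aux

/-- (a) The slice tensor product of slice regular functions is
slice regular. (b) Slice preserving slice functions commute and associate with all
slice functions under the slice tensor product; in particular slice preserving
slice regular functions lie in the center. -/
theorem stmt14 (n : ℕ) (hn : 0 < n) (D : Set (Fin n → ℂ)) (hne : D.Nonempty)
    (hinv : ConjInv D) (hD : IsOpen D) :
    (∀ (F G : Finset (Fin n) → (Fin n → ℂ) → ℍ) (f g fg : (Fin n → ℍ) → ℍ),
      IsStem D F → StemC1 D F → StemHolo D F → Induces D F f →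
      IsStem D G → StemC1 D G → StemHolo D G → Induces D G g →
      Induces D (SPT F G) fg → IsSliceRegular D fg) ∧
    (∀ F G H : Finset (Fin n) → (Fin n → ℂ) → ℍ,
      IsStem D F → IsStem D G → IsStem D H →
      (∀ K : Finset (Fin n), ∀ z ∈ D, ∃ r : ℝ, F K z = (r : ℍ)) →
      ∀ (α β : Fin n → ℝ) (J : Fin n → ℍ), (∀ k, J k ∈ Sph) → zOf α β ∈ D →
        (∑ K : Finset (Fin n), JK J K * SPT F G K (zOf α β) =
          ∑ K : Finset (Fin n), JK J K * SPT G F K (zOf α β)) ∧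
        (∑ K : Finset (Fin n), JK J K * SPT (SPT F G) H K (zOf α β) =
          ∑ K : Finset (Fin n), JK J K * SPT F (SPT G H) K (zOf α β)) ∧
        (∑ K : Finset (Fin n), JK J K * SPT (SPT G F) H K (zOf α β) =
          ∑ K : Finset (Fin n), JK J K * SPT G (SPT F H) K (zOf α β)) ∧
        (∑ K : Finset (Fin n), JK J K * SPT (SPT G H) F K (zOf α β) =
          ∑ K : Finset (Fin n), JK J K * SPT G (SPT H F) K (zOf α β))) := by
  constructor
  · intro F G f g fg hFs hF1 hFh hf hGs hG1 hGh hg hfg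
    exact ⟨SPT F G, aux_stem_SPT hFs hGs, aux_c1_SPT hF1 hG1,
      aux_holo_SPT hD hF1 hG1 hFh hGh, hfg⟩
  · intro F G H hFs hGs hHs hreal α β J hJ hz
    refine ⟨?_, ?_, ?_, ?_⟩
    · exact Finset.sum_congr rfl fun K _ => by rw [aux_comm_SPT hreal hz K]
    · exact Finset.sum_congr rfl fun K _ => by rw [aux_SPT_assoc]
    · exact Finset.sum_congr rfl fun K _ => by rw [aux_SPT_assoc]
    · exact Finset.sum_congr rfl fun K _ => by rw [aux_SPT_assoc]
end
end

section
/- Splitting decomposition: let D be open, let f = ℐ(F) with F a C¹ stem function, let J ∈ 𝕊 and let J₁ ∈ 𝕊 with JJ₁ = −J₁J (so {1, J, J₁, JJ₁} is a real vector basis of ℍ). Write the restriction f_J : Ω_D(J) → ℍ uniquely as f_J = f₀ + f₁J₁ with f₀, f₁ : Ω_D(J) → ℂ_J. Then f is slice regular if and only if both f₀ and f₁ are holomorphic with respect to J, i.e. ∂f_ℓ/∂α_h + J·∂f_ℓ/∂β_h = 0 on Ω_D(J) for ℓ ∈ {0,1} and every h ∈ {1,…,n}, where points of (ℂ_J)ⁿ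 are written (α₁+Jβ₁,…,αₙ+Jβₙ). -/
noncomputable section

variable {n : ℕ}

namespace Aux15
open scoped symmDiff

/-! ### Combinatorial lemmas -/

lemma negpow_symmDiff (A B : Finset (Fin n)) :
    ((-1:ℝ)) ^ ((A ∆ B).card) = (-1) ^ A.card * (-1) ^ B.card := by
  have h1 : (A ∆ B).card + 2 * (A ∩ B).card = A.card + B.card := by
    have h2 : A ∆ B = (A ∪ B) \ (A ∩ B) := by
      have := symmDiff_eq_sup_sdiff_inf (a := A) (b := B)
      simpa [Finset.inf_eq_inter, Finset.sup_eq_union] using this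
    have h3 : A ∩ B ⊆ A ∪ B := Finset.inter_subset_union
    have h4 := Finset.card_sdiff_of_subset h3
    have h5 := Finset.card_union_add_card_inter A B
    have h6 : (A ∩ B).card ≤ (A ∪ B).card := Finset.card_le_card h3
    rw [h2, h4]
    omega
  rw [← pow_add (-1:ℝ) A.card B.card, ← h1, pow_add, pow_mul, neg_one_sq, one_pow, mul_one]

lemma inter_symmDiff_right (K K₀ E : Finset (Fin n)) :
    (K ∆ K₀) ∩ E = (K ∩ E) ∆ (K₀ ∩ E) := by
  have := inf_symmDiff_distrib_right (α := Finset (Fin n)) K K₀ E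
  simpa [Finset.inf_eq_inter] using this

lemma inter_symmDiff_left (S E A : Finset (Fin n)) :
    S ∩ (E ∆ A) = (S ∩ E) ∆ (S ∩ A) := by
  have := inf_symmDiff_distrib_left (α := Finset (Fin n)) S E A
  simpa [Finset.inf_eq_inter] using this

lemma sum_negpow (S : Finset (Fin n)) :
    ∑ E : Finset (Fin n), ((-1:ℝ)) ^ ((S ∩ E).card) = if S = ∅ then (2:ℝ)^n else 0 := by
  by_cases hS : S = ∅
  · simp [hS, Finset.card_univ]
  · simp only [hS, if_false]
    obtain ⟨a, ha⟩ := Finset.nonempty_iff_ne_empty.2 hS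
    apply Finset.sum_ninvolution (fun E => E ∆ {a})
    · intro E
      have h7 : (S ∩ (E ∆ {a})) = (S ∩ E) ∆ {a} := by
        rw [inter_symmDiff_left, Finset.inter_singleton_of_mem ha]
      rw [h7, negpow_symmDiff (S ∩ E) {a}]
      simp only [Finset.card_singleton, pow_one]
      ring
    · intro E _
      intro hEa
      have : a ∈ E ∆ {a} ↔ a ∈ E := by rw [hEa]
      simp [Finset.mem_symmDiff] at this
    · intro E; exact Finset.mem_univ _
    · intro E; exact symmDiff_symmDiff_cancel_right {a} E

lemma sum_negpow_two (K K₀ : Finset (Fin n)) :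
    ∑ E : Finset (Fin n), ((-1:ℝ)) ^ ((K ∩ E).card) * ((-1:ℝ)) ^ ((K₀ ∩ E).card)
      = if K = K₀ then (2:ℝ)^n else 0 := by
  have step : ∀ E : Finset (Fin n), ((-1:ℝ)) ^ ((K ∩ E).card) * ((-1:ℝ)) ^ ((K₀ ∩ E).card)
      = ((-1:ℝ)) ^ (((K ∆ K₀) ∩ E).card) := by
    intro E
    rw [inter_symmDiff_right, negpow_symmDiff]
  simp_rw [step]
  rw [sum_negpow]
  congr 1
  simp [symmDiff_eq_bot]

lemma symmDiff_singleton_not_mem {K : Finset (Fin n)} {h : Fin n} (hK : h ∉ K) :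
    K ∆ {h} = insert h K := by
  ext a
  simp only [Finset.mem_symmDiff, Finset.mem_singleton, Finset.mem_insert]
  constructor
  · rintro (⟨ha, _⟩ | ⟨rfl, _⟩) <;> tauto
  · rintro (rfl | ha)
    · exact Or.inr ⟨rfl, hK⟩
    · exact Or.inl ⟨ha, fun hh => hK (hh ▸ ha)⟩

lemma symmDiff_singleton_mem {K : Finset (Fin n)} {h : Fin n} (hK : h ∈ K) :
    K ∆ {h} = K.erase h := by
  ext a
  simp only [Finset.mem_symmDiff, Finset.mem_singleton, Finset.mem_erase]
  constructor
  · rintro (⟨ha, hne⟩ | ⟨rfl, hna⟩)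
    · exact ⟨hne, ha⟩
    · exact absurd hK hna
  · rintro ⟨hne, ha⟩
    exact Or.inl ⟨ha, hne⟩

/-! ### Quaternionic algebra -/

lemma half_two (x : ℍ) : (2:ℝ)⁻¹ • ((2:ℝ) • x) = x := by
  rw [smul_smul]; norm_num

def P0 (J : ℍ) : ℍ →L[ℝ] ℍ :=
  (2:ℝ)⁻¹ • (ContinuousLinearMap.id ℝ ℍ - ContinuousLinearMap.mulLeftRight ℝ ℍ J J)

def P1 (J J₁ : ℍ) : ℍ →L[ℝ] ℍ :=
  -(((ContinuousLinearMap.mul ℝ ℍ).flip J₁).comp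
    ((2:ℝ)⁻¹ • (ContinuousLinearMap.id ℝ ℍ + ContinuousLinearMap.mulLeftRight ℝ ℍ J J)))

lemma P0_apply (J q : ℍ) : P0 J q = (2:ℝ)⁻¹ • (q - J * q * J) := by
  simp [P0]

lemma P1_apply (J J₁ q : ℍ) : P1 J J₁ q = -(((2:ℝ)⁻¹ • (q + J * q * J)) * J₁) := by
  simp only [P1, ContinuousLinearMap.neg_apply, ContinuousLinearMap.comp_apply,
    ContinuousLinearMap.smul_apply, ContinuousLinearMap.add_apply,
    ContinuousLinearMap.id_apply, ContinuousLinearMap.mulLeftRight_apply,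
    ContinuousLinearMap.flip_apply, ContinuousLinearMap.mul_apply']

lemma sph_mul_self {J : ℍ} (hJ : J ∈ Sph) : J * J = -1 := by
  have : J ^ 2 = -1 := hJ
  rwa [sq] at this

lemma commJ {J x : ℍ} (hx : x ∈ CJ J) : J * x = x * J := by
  obtain ⟨a, b, rfl⟩ := hx
  have ha := Quaternion.coe_commutes a J
  have hb := Quaternion.coe_commutes b J
  calc J * (↑a + ↑b * J) = (J * ↑a) + (J * ↑b) * J := by noncomm_ring
    _ = (↑a * J) + (↑b * J) * J := by rw [← ha, ← hb]
    _ = (↑a + ↑b * J) * J := by noncomm_ring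

lemma JqJ (J J₁ : ℍ) (hJ : J ∈ Sph) (hanti : J * J₁ = -(J₁ * J))
    {x y : ℍ} (hx : x ∈ CJ J) (hy : y ∈ CJ J) :
    J * (x + y * J₁) * J = -x + y * J₁ := by
  have hJJ := sph_mul_self hJ
  have hx' := commJ hx
  have hy' := commJ hy
  have h1 : J * x * J = -x := by
    rw [hx', mul_assoc, hJJ, mul_neg_one]
  have h2 : J * (y * J₁) * J = y * J₁ := by
    have e1 : J * (y * J₁) = y * (J * J₁) := by rw [← mul_assoc, hy', mul_assoc]
    rw [e1, hanti]
    calc y * -(J₁ * J) * J = -(y * (J₁ * (J * J))) := by noncomm_ring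
      _ = y * J₁ := by rw [hJJ]; noncomm_ring
  calc J * (x + y * J₁) * J = J * x * J + J * (y * J₁) * J := by noncomm_ring
    _ = -x + y * J₁ := by rw [h1, h2]

lemma proj0 (J J₁ : ℍ) (hJ : J ∈ Sph) (hanti : J * J₁ = -(J₁ * J))
    {x y : ℍ} (hx : x ∈ CJ J) (hy : y ∈ CJ J) :
    P0 J (x + y * J₁) = x := by
  rw [P0_apply, JqJ J J₁ hJ hanti hx hy]
  have h : x + y * J₁ - (-x + y * J₁) = (2:ℝ) • x := by rw [two_smul]; abel
  rw [h, half_two]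

lemma proj1 (J J₁ : ℍ) (hJ : J ∈ Sph) (hJ₁ : J₁ ∈ Sph) (hanti : J * J₁ = -(J₁ * J))
    {x y : ℍ} (hx : x ∈ CJ J) (hy : y ∈ CJ J) :
    P1 J J₁ (x + y * J₁) = y := by
  rw [P1_apply, JqJ J J₁ hJ hanti hx hy]
  have h : x + y * J₁ + (-x + y * J₁) = (2:ℝ) • (y * J₁) := by rw [two_smul]; abel
  rw [h, half_two, mul_assoc, sph_mul_self hJ₁, mul_neg_one, neg_neg]

lemma P0_mulJ (J q : ℍ) : P0 J (J * q) = J * P0 J q := by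
  rw [P0_apply, P0_apply, mul_smul_comm]
  congr 1
  noncomm_ring

lemma P1_mulJ (J J₁ q : ℍ) : P1 J J₁ (J * q) = J * P1 J J₁ q := by
  rw [P1_apply, P1_apply]
  simp only [mul_neg, mul_smul_comm, smul_mul_assoc, ← mul_assoc]
  congr 2
  noncomm_ring

lemma P0_add_P1 (J J₁ : ℍ) (hJ₁ : J₁ ∈ Sph) (q : ℍ) :
    P0 J q + P1 J J₁ q * J₁ = q := by
  rw [P0_apply, P1_apply, neg_mul, smul_mul_assoc, smul_mul_assoc, mul_assoc _ J₁ J₁,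
    sph_mul_self hJ₁, mul_neg_one, ← smul_neg, neg_neg, ← smul_add]
  have h : q - J * q * J + (q + J * q * J) = (2:ℝ) • q := by rw [two_smul]; abel
  rw [h, half_two]

/-! ### Slice functions restricted to a slice -/

lemma JK_const (J : ℍ) (K : Finset (Fin n)) : JK (fun _ => J) K = J ^ K.card := by
  unfold JK
  rw [List.map_const', List.prod_replicate, Finset.length_sort]

lemma phiJ_eq (J : ℍ) (z : Fin n → ℂ) :
    phiJ J z = ptOf (fun h => (z h).re) (fun h => (z h).im) (fun _ => J) := rfl

lemma zOf_re_im (z : Fin n → ℂ) : zOf (fun h => (z h).re) (fun h => (z h).im) = z := by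
  funext h
  exact Complex.re_add_im (z h)

def gJ (J : ℍ) (F : Finset (Fin n) → (Fin n → ℂ) → ℍ) : (Fin n → ℂ) → ℍ :=
  fun z => ∑ K : Finset (Fin n), J ^ K.card * F K z

/-! ### Coordinatewise conjugations -/

def cE (E : Finset (Fin n)) : (Fin n → ℂ) →L[ℝ] (Fin n → ℂ) :=
  ContinuousLinearMap.pi fun h =>
    if h ∈ E then
      (Complex.conjCLE.toContinuousLinearMap).comp (ContinuousLinearMap.proj h)
    else ContinuousLinearMap.proj h

lemma cE_apply (E : Finset (Fin n)) (z : Fin n → ℂ) (h : Fin n) :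
    cE E z h = if h ∈ E then (starRingEnd ℂ) (z h) else z h := by
  by_cases hh : h ∈ E <;> simp [cE, hh, ContinuousLinearMap.pi_apply, Complex.conjCLE_apply]

lemma cE_empty (z : Fin n → ℂ) : cE (∅ : Finset (Fin n)) z = z := by
  funext h; simp [cE_apply]

lemma cE_insert {a : Fin n} {E : Finset (Fin n)} (ha : a ∉ E) (z : Fin n → ℂ) :
    cE (insert a E) z = conjCoord a (cE E z) := by
  funext h
  rw [conjCoord, cE_apply]
  by_cases hh : h = a
  · subst hh
    simp [Function.update_self, cE_apply, ha]
  · rw [Function.update_of_ne hh, cE_apply]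
    simp [Finset.mem_insert, hh]

lemma cE_single_one (E : Finset (Fin n)) (h : Fin n) :
    cE E (Pi.single h (1:ℂ)) = Pi.single h (1:ℂ) := by
  funext h'
  rw [cE_apply]
  by_cases hh : h' = h
  · subst hh; by_cases hE : h' ∈ E <;> simp [hE, Pi.single_eq_same]
  · by_cases hE : h' ∈ E <;> simp [hE, Pi.single_eq_of_ne hh]

lemma cE_single_I_mem {E : Finset (Fin n)} {h : Fin n} (hE : h ∈ E) :
    cE E (Pi.single h (Complex.I)) = -Pi.single h (Complex.I) := by
  funext h'
  rw [Pi.neg_apply, cE_apply]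
  by_cases hh : h' = h
  · subst hh; simp [hE, Pi.single_eq_same, Complex.conj_I]
  · by_cases hE' : h' ∈ E <;> simp [hE', Pi.single_eq_of_ne hh]

lemma cE_single_I_not_mem {E : Finset (Fin n)} {h : Fin n} (hE : h ∉ E) :
    cE E (Pi.single h (Complex.I)) = Pi.single h (Complex.I) := by
  funext h'
  rw [cE_apply]
  by_cases hh : h' = h
  · subst hh; simp [hE]
  · by_cases hE' : h' ∈ E <;> simp [hE', Pi.single_eq_of_ne hh]

lemma stem_conj {D : Set (Fin n → ℂ)} {F : Finset (Fin n) → (Fin n → ℂ) → ℍ}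
    (hinv : ConjInv D) (hF : IsStem D F) (E : Finset (Fin n)) :
    ∀ w ∈ D, cE E w ∈ D ∧
      ∀ K, F K (cE E w) = ((-1:ℝ) ^ ((K ∩ E).card)) • F K w := by
  classical
  induction E using Finset.induction_on with
  | empty =>
    intro w hw
    rw [cE_empty]
    exact ⟨hw, fun K => by simp⟩
  | insert a E ha ih =>
    intro w hw
    obtain ⟨hwD, hvals⟩ := ih w hw
    rw [cE_insert ha]
    refine ⟨hinv a _ hwD, fun K => ?_⟩
    rw [hF K a _ hwD, hvals K]
    by_cases haK : a ∈ K
    · rw [if_pos haK]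
      have hKi : K ∩ insert a E = insert a (K ∩ E) := Finset.inter_insert_of_mem haK
      have hna : a ∉ K ∩ E := fun hmem => ha (Finset.mem_of_mem_inter_right hmem)
      rw [hKi, Finset.card_insert_of_notMem hna, pow_succ, mul_neg_one, neg_smul,
        neg_one_mul]
    · rw [if_neg haK, Finset.inter_insert_of_notMem haK, one_mul]

end Aux15

namespace Aux15
open scoped symmDiff

lemma pair_sum_zero (h : Fin n) (t : Finset (Fin n) → ℍ)
    (key : ∀ K : Finset (Fin n), h ∉ K → t K + t (insert h K) = 0) :
    ∑ K : Finset (Fin n), t K = 0 := by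
  classical
  rw [← Finset.sum_filter_add_sum_filter_not Finset.univ (fun K => h ∈ K) t]
  have reind : ∑ K ∈ Finset.univ.filter (fun K : Finset (Fin n) => h ∈ K), t K
      = ∑ K ∈ Finset.univ.filter (fun K : Finset (Fin n) => ¬ h ∈ K), t (insert h K) := by
    refine Finset.sum_nbij' (fun K => K.erase h) (fun K => insert h K) ?_ ?_ ?_ ?_ ?_
    · intro K hK
      simp only [Finset.mem_filter, Finset.mem_univ, true_and] at *
      exact Finset.notMem_erase h K
    · intro K hK
      simp only [Finset.mem_filter, Finset.mem_univ, true_and] at *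
      exact Finset.mem_insert_self h K
    · intro K hK
      simp only [Finset.mem_filter, Finset.mem_univ, true_and] at hK
      exact Finset.insert_erase hK
    · intro K hK
      simp only [Finset.mem_filter, Finset.mem_univ, true_and] at hK
      exact Finset.erase_insert hK
    · intro K hK
      simp only [Finset.mem_filter, Finset.mem_univ, true_and] at hK
      rw [Finset.insert_erase hK]
  rw [reind, ← Finset.sum_add_distrib]
  refine Finset.sum_eq_zero fun K hK => ?_
  simp only [Finset.mem_filter, Finset.mem_univ, true_and] at hK
  rw [add_comm]
  exact key K hK

lemma ortho_main (J : ℍ) (h : Fin n) (A B : Finset (Fin n) → ℍ)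
    (eqE : ∀ E : Finset (Fin n), ∑ K : Finset (Fin n),
      (((-1:ℝ) ^ ((K ∩ E).card)) • (J ^ K.card * A K)
        + ((-1:ℝ) ^ (((K ∆ {h}) ∩ E).card)) • (J ^ (K.card + 1) * B K)) = 0)
    (T : Finset (Fin n)) :
    J ^ T.card * A T + J ^ ((T ∆ {h}).card + 1) * B (T ∆ {h}) = 0 := by
  classical
  have hws : ∑ E : Finset (Fin n), ((-1:ℝ) ^ ((T ∩ E).card)) •
      (∑ K : Finset (Fin n), (((-1:ℝ) ^ ((K ∩ E).card)) • (J ^ K.card * A K)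
        + ((-1:ℝ) ^ (((K ∆ {h}) ∩ E).card)) • (J ^ (K.card + 1) * B K))) = 0 := by
    refine Finset.sum_eq_zero fun E _ => ?_
    rw [eqE E, smul_zero]
  simp only [Finset.smul_sum, smul_add, smul_smul] at hws
  rw [Finset.sum_comm] at hws
  simp only [Finset.sum_add_distrib, ← Finset.sum_smul] at hws
  simp only [sum_negpow_two] at hws
  have s1 : ∑ K : Finset (Fin n), (if T = K then (2:ℝ)^n else 0) • (J ^ K.card * A K)
      = (2:ℝ)^n • (J ^ T.card * A T) := by
    rw [Finset.sum_eq_single T]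
    · rw [if_pos rfl]
    · intro K _ hK
      rw [if_neg (fun hh => hK hh.symm), zero_smul]
    · intro hT; exact absurd (Finset.mem_univ T) hT
  have s2 : ∑ K : Finset (Fin n), (if T = K ∆ {h} then (2:ℝ)^n else 0) • (J ^ (K.card + 1) * B K)
      = (2:ℝ)^n • (J ^ ((T ∆ {h}).card + 1) * B (T ∆ {h})) := by
    rw [Finset.sum_eq_single (T ∆ {h})]
    · rw [if_pos (symmDiff_symmDiff_cancel_right {h} T).symm]
    · intro K _ hK
      rw [if_neg, zero_smul]
      intro hh
      apply hK
      rw [hh, symmDiff_symmDiff_cancel_right]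
    · intro hT; exact absurd (Finset.mem_univ _) hT
  rw [s1, s2, ← smul_add] at hws
  have h2n : ((2:ℝ)^n) ≠ 0 := by positivity
  exact (smul_eq_zero.mp hws).resolve_left h2n

lemma cr_extract (J : ℍ) (hJJ : J * J = -1) (h : Fin n) (A B : Finset (Fin n) → ℍ)
    (main : ∀ T : Finset (Fin n),
      J ^ T.card * A T + J ^ ((T ∆ {h}).card + 1) * B (T ∆ {h}) = 0)
    (K₀ : Finset (Fin n)) (hK₀ : h ∉ K₀) :
    A K₀ = B (insert h K₀) ∧ B K₀ = -A (insert h K₀) := by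
  have hu1 : J * -J = 1 := by rw [mul_neg, hJJ, neg_neg]
  have hu2 : -J * J = 1 := by rw [neg_mul, hJJ, neg_neg]
  have hJu : IsUnit J := ⟨⟨J, -J, hu1, hu2⟩, rfl⟩
  have hins : K₀ ∆ {h} = insert h K₀ := symmDiff_singleton_not_mem hK₀
  have hins2 : (insert h K₀) ∆ {h} = K₀ := by
    rw [symmDiff_singleton_mem (Finset.mem_insert_self h K₀), Finset.erase_insert hK₀]
  have hcard : (insert h K₀).card = K₀.card + 1 := Finset.card_insert_of_notMem hK₀
  constructor
  · have m1 := main K₀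
    rw [hins, hcard] at m1
    have hp : J ^ (K₀.card + 1 + 1) = -(J ^ K₀.card) := by
      rw [pow_succ, pow_succ, mul_assoc, hJJ, mul_neg_one]
    rw [hp, neg_mul] at m1
    have h3 : J ^ K₀.card * (A K₀ - B (insert h K₀)) = 0 := by
      rw [mul_sub, sub_eq_add_neg]
      exact m1
    have h4 := ((hJu.pow K₀.card).mul_right_eq_zero).mp h3
    exact sub_eq_zero.mp h4
  · have m2 := main (insert h K₀)
    rw [hins2, hcard] at m2
    have h3 : J ^ (K₀.card + 1) * (A (insert h K₀) + B K₀) = 0 := by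
      rw [mul_add]
      exact m2
    have h4 := ((hJu.pow _).mul_right_eq_zero).mp h3
    exact eq_neg_of_add_eq_zero_right h4

end Aux15

/-- **Splitting decomposition of slice regular functions.** -/
theorem stmt15 (n : ℕ) (hn : 0 < n) (D : Set (Fin n → ℂ)) (hne : D.Nonempty)
    (hinv : ConjInv D) (hD : IsOpen D)
    (F : Finset (Fin n) → (Fin n → ℂ) → ℍ) (hF : IsStem D F) (hC1 : StemC1 D F)
    (f : (Fin n → ℍ) → ℍ) (hf : Induces D F f)
    (J J₁ : ℍ) (hJ : J ∈ Sph) (hJ₁ : J₁ ∈ Sph) (hanti : J * J₁ = -(J₁ * J))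
    (f₀ f₁ : (Fin n → ℂ) → ℍ)
    (h₀ : ∀ z, f₀ z ∈ CJ J) (h₁ : ∀ z, f₁ z ∈ CJ J)
    (hdec : ∀ z ∈ D, f (phiJ J z) = f₀ z + f₁ z * J₁) :
    StemHolo D F ↔
      ∀ z ∈ D, ∀ h : Fin n,
        (fderiv ℝ f₀ z (Pi.single h 1) +
          J * fderiv ℝ f₀ z (Pi.single h Complex.I) = 0) ∧
        (fderiv ℝ f₁ z (Pi.single h 1) +
          J * fderiv ℝ f₁ z (Pi.single h Complex.I) = 0) := by
  classical
  have hJJ : J * J = -1 := Aux15.sph_mul_self hJ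
  have hdiffF : ∀ (K : Finset (Fin n)) (w : Fin n → ℂ), w ∈ D → DifferentiableAt ℝ (F K) w :=
    fun K w hw => (((hC1 K).differentiableOn one_ne_zero) w hw).differentiableAt (hD.mem_nhds hw)
  have hGder : ∀ z ∈ D, HasFDerivAt (Aux15.gJ J F)
      (∑ K : Finset (Fin n),
        (ContinuousLinearMap.mul ℝ ℍ (J ^ K.card)).comp (fderiv ℝ (F K) z)) z := by
    intro z hz
    exact HasFDerivAt.fun_sum fun K _ =>
      ((ContinuousLinearMap.mul ℝ ℍ (J ^ K.card)).hasFDerivAt).comp z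
        ((hdiffF K z hz).hasFDerivAt)
  have hGv : ∀ z ∈ D, ∀ v, fderiv ℝ (Aux15.gJ J F) z v
      = ∑ K : Finset (Fin n), J ^ K.card * fderiv ℝ (F K) z v := by
    intro z hz v
    rw [(hGder z hz).fderiv, ContinuousLinearMap.sum_apply]
    rfl
  have hGf : ∀ z ∈ D, f (phiJ J z) = Aux15.gJ J F z := by
    intro z hz
    have hz' : zOf (fun h => (z h).re) (fun h => (z h).im) ∈ D := by
      rwa [Aux15.zOf_re_im]
    have h2 := hf (fun h => (z h).re) (fun h => (z h).im) (fun _ => J) (fun _ => hJ) hz'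
    rw [Aux15.phiJ_eq, h2, Aux15.zOf_re_im]
    exact Finset.sum_congr rfl fun K _ => by rw [Aux15.JK_const]
  have hsplit : ∀ z ∈ D, Aux15.gJ J F z = f₀ z + f₁ z * J₁ :=
    fun z hz => (hGf z hz).symm.trans (hdec z hz)
  have hf0 : ∀ z ∈ D, f₀ z = Aux15.P0 J (Aux15.gJ J F z) := by
    intro z hz
    rw [hsplit z hz, Aux15.proj0 J J₁ hJ hanti (h₀ z) (h₁ z)]
  have hf1 : ∀ z ∈ D, f₁ z = Aux15.P1 J J₁ (Aux15.gJ J F z) := by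
    intro z hz
    rw [hsplit z hz, Aux15.proj1 J J₁ hJ hJ₁ hanti (h₀ z) (h₁ z)]
  have hdf : ∀ (P : ℍ →L[ℝ] ℍ) (fP : (Fin n → ℂ) → ℍ),
      (∀ z ∈ D, fP z = P (Aux15.gJ J F z)) →
      ∀ z ∈ D, ∀ v, fderiv ℝ fP z v = P (fderiv ℝ (Aux15.gJ J F) z v) := by
    intro P fP hfP z hz v
    have h1 := hGder z hz
    have h2 : HasFDerivAt (fun w => P (Aux15.gJ J F w))
        (P.comp (∑ K : Finset (Fin n),
          (ContinuousLinearMap.mul ℝ ℍ (J ^ K.card)).comp (fderiv ℝ (F K) z))) z :=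
      P.hasFDerivAt.comp z h1
    have heq : fP =ᶠ[nhds z] fun w => P (Aux15.gJ J F w) :=
      Filter.eventuallyEq_of_mem (hD.mem_nhds hz) hfP
    rw [(h2.congr_of_eventuallyEq heq).fderiv, h1.fderiv]
    rfl
  have hdf0 := hdf (Aux15.P0 J) f₀ hf0
  have hdf1 := hdf (Aux15.P1 J J₁) f₁ hf1
  have iff1 : (∀ z ∈ D, ∀ h : Fin n, fderiv ℝ (Aux15.gJ J F) z (Pi.single h 1)
        + J * fderiv ℝ (Aux15.gJ J F) z (Pi.single h Complex.I) = 0) ↔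
      (∀ z ∈ D, ∀ h : Fin n,
        (fderiv ℝ f₀ z (Pi.single h 1) + J * fderiv ℝ f₀ z (Pi.single h Complex.I) = 0) ∧
        (fderiv ℝ f₁ z (Pi.single h 1) + J * fderiv ℝ f₁ z (Pi.single h Complex.I) = 0)) := by
    constructor
    · intro H z hz h
      have hz0 := H z hz h
      constructor
      · rw [hdf0 z hz (Pi.single h 1), hdf0 z hz (Pi.single h Complex.I),
          ← Aux15.P0_mulJ, ← map_add, hz0, map_zero]
      · rw [hdf1 z hz (Pi.single h 1), hdf1 z hz (Pi.single h Complex.I),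
          ← Aux15.P1_mulJ, ← map_add, hz0, map_zero]
    · intro H z hz h
      obtain ⟨H0, H1⟩ := H z hz h
      have d1 : fderiv ℝ (Aux15.gJ J F) z (Pi.single h 1)
          = fderiv ℝ f₀ z (Pi.single h 1) + fderiv ℝ f₁ z (Pi.single h 1) * J₁ := by
        rw [hdf0 z hz, hdf1 z hz, Aux15.P0_add_P1 J J₁ hJ₁]
      have dI : fderiv ℝ (Aux15.gJ J F) z (Pi.single h Complex.I)
          = fderiv ℝ f₀ z (Pi.single h Complex.I)
            + fderiv ℝ f₁ z (Pi.single h Complex.I) * J₁ := by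
        rw [hdf0 z hz, hdf1 z hz, Aux15.P0_add_P1 J J₁ hJ₁]
      rw [d1, dI]
      have hring : ∀ a₀ a₁ b₀ b₁ : ℍ, a₀ + a₁ * J₁ + J * (b₀ + b₁ * J₁)
          = (a₀ + J * b₀) + (a₁ + J * b₁) * J₁ := by
        intro a₀ a₁ b₀ b₁; noncomm_ring
      rw [hring, H0, H1, zero_mul, add_zero]
  rw [← iff1]
  constructor
  · -- StemHolo → CR for gJ
    intro hs z hz h
    rw [hGv z hz, hGv z hz, Finset.mul_sum, ← Finset.sum_add_distrib]
    refine Aux15.pair_sum_zero h _ fun K hK => ?_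
    obtain ⟨e1, e2⟩ := hs z hz h K hK
    rw [e1, e2, Finset.card_insert_of_notMem hK]
    have hp1 : J * (J ^ K.card * -fderiv ℝ (F (insert h K)) z (Pi.single h 1))
        = -(J ^ (K.card + 1) * fderiv ℝ (F (insert h K)) z (Pi.single h 1)) := by
      rw [mul_neg, mul_neg, ← mul_assoc, ← pow_succ']
    have hp2 : J * (J ^ (K.card + 1) * fderiv ℝ (F (insert h K)) z (Pi.single h Complex.I))
        = -(J ^ K.card * fderiv ℝ (F (insert h K)) z (Pi.single h Complex.I)) := by
      rw [← mul_assoc, ← pow_succ']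
      have hh : J ^ (K.card + 1 + 1) = -(J ^ K.card) := by
        rw [pow_succ, pow_succ, mul_assoc, hJJ, mul_neg_one]
      rw [hh, neg_mul]
    rw [hp1, hp2]
    abel
  · -- CR for gJ → StemHolo
    intro hcr z hz h K₀ hK₀
    have hconj := Aux15.stem_conj hinv hF
    have hdconj : ∀ (E K : Finset (Fin n)) (v : Fin n → ℂ),
        fderiv ℝ (F K) (Aux15.cE E z) (Aux15.cE E v)
          = ((-1:ℝ) ^ ((K ∩ E).card)) • fderiv ℝ (F K) z v := by
      intro E K v
      have hzE : Aux15.cE E z ∈ D := (hconj E z hz).1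
      have h1 : HasFDerivAt (fun w => F K (Aux15.cE E w))
          ((fderiv ℝ (F K) (Aux15.cE E z)).comp (Aux15.cE E)) z :=
        ((hdiffF K _ hzE).hasFDerivAt).comp z (Aux15.cE E).hasFDerivAt
      have h2 : HasFDerivAt (fun w => ((-1:ℝ) ^ ((K ∩ E).card)) • F K w)
          (((-1:ℝ) ^ ((K ∩ E).card)) • fderiv ℝ (F K) z) z :=
        by have := ((hdiffF K z hz).hasFDerivAt).const_smul ((-1:ℝ) ^ ((K ∩ E).card)); exact this
      have heq : (fun w => ((-1:ℝ) ^ ((K ∩ E).card)) • F K w)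
          =ᶠ[nhds z] fun w => F K (Aux15.cE E w) :=
        Filter.eventuallyEq_of_mem (hD.mem_nhds hz) fun w hw => ((hconj E w hw).2 K).symm
      have h5 : (fderiv ℝ (F K) (Aux15.cE E z)).comp (Aux15.cE E)
          = ((-1:ℝ) ^ ((K ∩ E).card)) • fderiv ℝ (F K) z :=
        (h1.congr_of_eventuallyEq heq).unique h2
      calc fderiv ℝ (F K) (Aux15.cE E z) (Aux15.cE E v)
          = ((fderiv ℝ (F K) (Aux15.cE E z)).comp (Aux15.cE E)) v := rfl
        _ = (((-1:ℝ) ^ ((K ∩ E).card)) • fderiv ℝ (F K) z) v := by rw [h5]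
        _ = _ := rfl
    have eqE : ∀ E : Finset (Fin n), ∑ K : Finset (Fin n),
        (((-1:ℝ) ^ ((K ∩ E).card)) • (J ^ K.card * fderiv ℝ (F K) z (Pi.single h 1))
          + ((-1:ℝ) ^ (((symmDiff K {h}) ∩ E).card)) •
            (J ^ (K.card + 1) * fderiv ℝ (F K) z (Pi.single h Complex.I))) = 0 := by
      intro E
      have hzE : Aux15.cE E z ∈ D := (hconj E z hz).1
      have h0 := hcr (Aux15.cE E z) hzE h
      rw [hGv _ hzE, hGv _ hzE, Finset.mul_sum, ← Finset.sum_add_distrib] at h0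
      refine (Finset.sum_congr rfl fun K _ => ?_).trans h0
      have t1 : fderiv ℝ (F K) (Aux15.cE E z) (Pi.single h 1)
          = ((-1:ℝ) ^ ((K ∩ E).card)) • fderiv ℝ (F K) z (Pi.single h 1) := by
        conv_lhs => rw [← Aux15.cE_single_one E h]
        exact hdconj E K _
      have hsign : ((-1:ℝ) ^ (((symmDiff K {h}) ∩ E).card))
          = ((-1:ℝ) ^ ((K ∩ E).card)) * ((-1:ℝ) ^ (({h} ∩ E : Finset (Fin n)).card)) := by
        rw [Aux15.inter_symmDiff_right, Aux15.negpow_symmDiff]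
      have t2 : fderiv ℝ (F K) (Aux15.cE E z) (Pi.single h Complex.I)
          = ((-1:ℝ) ^ (((symmDiff K {h}) ∩ E).card)) •
            fderiv ℝ (F K) z (Pi.single h Complex.I) := by
        by_cases hE : h ∈ E
        · have e1 : (Pi.single h Complex.I : Fin n → ℂ)
              = -(Aux15.cE E (Pi.single h Complex.I)) := by
            rw [Aux15.cE_single_I_mem hE, neg_neg]
          rw [hsign, Finset.singleton_inter_of_mem hE]
          conv_lhs => rw [e1]
          rw [map_neg, hdconj E K _]
          rw [Finset.card_singleton, pow_one, mul_neg_one, neg_smul]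
        · have e1 : (Pi.single h Complex.I : Fin n → ℂ)
              = Aux15.cE E (Pi.single h Complex.I) :=
            (Aux15.cE_single_I_not_mem hE).symm
          rw [hsign, Finset.singleton_inter_of_notMem hE]
          conv_lhs => rw [e1]
          rw [hdconj E K _]
          simp
      rw [t1, t2]
      simp only [mul_smul_comm]
      rw [← mul_assoc, ← pow_succ']
    have main := Aux15.ortho_main J h
      (fun K => fderiv ℝ (F K) z (Pi.single h 1))
      (fun K => fderiv ℝ (F K) z (Pi.single h Complex.I)) eqE
    exact Aux15.cr_extract J hJJ h
      (fun K => fderiv ℝ (F K) z (Pi.single h 1))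
      (fun K => fderiv ℝ (F K) z (Pi.single h Complex.I)) main K₀ hK₀
end
end

section
/- Let D be open in ℂⁿ. For all ℓ, m ∈ ℕⁿ and a, b ∈ ℍ, the slice tensor product of the monomial slice functions x ↦ x^ℓa and x ↦ x^mb on Ω_D is the monomial slice function x ↦ x^{ℓ+m}(ab). Consequently, for polynomial functions s(x) = ∑_{p∈P} x^p a_p and t(x) = ∑_{q∈Q} x^q b_q on Ω_D (P, Q ⊆ ℕⁿ finite), the slice tensor product satisfies s⊙t = ∑_{p∈P, q∈Q} x^{p+q}(a_p b_q), i.e. the slice tensor product of polynomials coincides with their star product. -/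
noncomputable section

variable {n : ℕ}

-- AUX START
namespace Stmt18Aux

/-- the quaternion i -/
def iq : ℍ := ⟨0,1,0,0⟩

lemma iq_sq : iq ^ 2 = -1 := by
  rw [sq]
  ext <;> simp [Quaternion.re_mul, Quaternion.imI_mul, Quaternion.imJ_mul, Quaternion.imK_mul] <;> simp [iq] <;> rfl

lemma iq_ne_zero : iq ≠ 0 := by
  intro h
  have : (iq : ℍ).imI = 0 := by rw [h]; rfl
  simp [iq] at this

def sgn (b : Bool) : ℝ := if b then 1 else -1

lemma sgn_mul_self (b : Bool) : sgn b * sgn b = 1 := by cases b <;> simp [sgn]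

variable {n : ℕ}

def chi (K : Finset (Fin n)) (ε : Fin n → Bool) : ℝ := ∏ h ∈ K, sgn (ε h)

lemma chi_eq_univ (K : Finset (Fin n)) (ε : Fin n → Bool) :
    chi K ε = ∏ h : Fin n, (if h ∈ K then sgn (ε h) else 1) := by
  rw [chi, Fintype.prod_ite_mem]

lemma chi_mul (K K₀ : Finset (Fin n)) (ε : Fin n → Bool) :
    chi K ε * chi K₀ ε = chi (symmDiff K K₀) ε := by
  rw [chi_eq_univ, chi_eq_univ, chi_eq_univ, ← Finset.prod_mul_distrib]
  refine Finset.prod_congr rfl fun h _ => ?_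
  by_cases h1 : h ∈ K <;> by_cases h2 : h ∈ K₀ <;>
    simp [h1, h2, Finset.mem_symmDiff, sgn_mul_self]

lemma chi_orth (K : Finset (Fin n)) :
    ∑ ε : Fin n → Bool, chi K ε = if K = ∅ then (2 : ℝ) ^ n else 0 := by
  simp_rw [chi_eq_univ]
  rw [← Fintype.prod_sum (fun h (b : Bool) => if h ∈ K then sgn b else 1)]
  rcases Finset.eq_empty_or_nonempty K with hK | ⟨h₀, hh₀⟩
  · subst hK
    simp [sgn]
  · rw [if_neg (by rintro rfl; exact absurd hh₀ (by simp))]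
    refine Finset.prod_eq_zero (Finset.mem_univ h₀) ?_
    simp [hh₀, sgn]

/-- product of a list of smuls -/
lemma list_prod_smul (r : Fin n → ℝ) (x : Fin n → ℍ) :
    ∀ l : List (Fin n), (l.map fun h => r h • x h).prod
      = ((l.map r).prod) • (l.map x).prod := by
  intro l
  induction l with
  | nil => simp
  | cons a t ih => simp [ih, smul_mul_smul_comm, smul_smul, mul_comm]

lemma list_prod_real (r : Fin n → ℝ) (K : Finset (Fin n)) :
    ((K.sort (· ≤ ·)).map r).prod = ∏ h ∈ K, r h := by
  rw [← Finset.prod_map_toList]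
  exact List.Perm.prod_eq (List.Perm.map r (Finset.sort_perm_toList _ _))

def Jeps (ε : Fin n → Bool) : Fin n → ℍ := fun h => sgn (ε h) • iq

lemma Jeps_mem_Sph (ε : Fin n → Bool) (h : Fin n) : Jeps ε h ∈ Sph := by
  show (sgn (ε h) • iq) ^ 2 = -1
  rw [smul_pow, iq_sq]
  cases hε : ε h <;> simp [sgn]

lemma JK_Jeps (ε : Fin n → Bool) (K : Finset (Fin n)) :
    JK (Jeps ε) K = chi K ε • JK (fun _ => iq) K := by
  rw [JK, JK]
  show ((K.sort (· ≤ ·)).map fun h => sgn (ε h) • iq).prod = _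
  rw [list_prod_smul (fun h => sgn (ε h)) (fun _ => iq)]
  rw [list_prod_real]
  rfl

lemma JK_const_iq (K : Finset (Fin n)) : JK (fun _ => iq) K = iq ^ K.card := by
  rw [JK]
  rw [List.map_const']
  rw [List.prod_replicate, Finset.length_sort]

lemma JK_const_iq_ne_zero (K : Finset (Fin n)) : JK (fun _ => iq) K ≠ 0 := by
  rw [JK_const_iq]
  exact pow_ne_zero _ iq_ne_zero

lemma induces_unique {D : Set (Fin n → ℂ)} {F F' : Finset (Fin n) → (Fin n → ℂ) → ℍ}
    {f : (Fin n → ℍ) → ℍ} (hF : Induces D F f) (hF' : Induces D F' f)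
    (α β : Fin n → ℝ) (hz : zOf α β ∈ D) (K₀ : Finset (Fin n)) :
    F K₀ (zOf α β) = F' K₀ (zOf α β) := by
  set z := zOf α β with hzdef
  set G : Finset (Fin n) → ℍ := fun K => F K z - F' K z with hG
  have key : ∀ ε : Fin n → Bool,
      ∑ K : Finset (Fin n), chi K ε • (JK (fun _ => iq) K * G K) = 0 := by
    intro ε
    have h1 := hF α β (Jeps ε) (Jeps_mem_Sph ε) hz
    have h2 := hF' α β (Jeps ε) (Jeps_mem_Sph ε) hz
    have h3 : ∑ K : Finset (Fin n), JK (Jeps ε) K * G K = 0 := by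
      simp only [hG, hzdef, mul_sub, Finset.sum_sub_distrib, ← h1, ← h2, sub_self]
    calc ∑ K : Finset (Fin n), chi K ε • (JK (fun _ => iq) K * G K)
        = ∑ K : Finset (Fin n), JK (Jeps ε) K * G K := by
          refine Finset.sum_congr rfl fun K _ => ?_
          rw [JK_Jeps, smul_mul_assoc]
      _ = 0 := h3
  have main : ((2:ℝ)^n) • (JK (fun _ => iq) K₀ * G K₀) = 0 := by
    set T : Finset (Fin n) → ℍ := fun K => JK (fun _ => iq) K * G K with hT
    have this0 : ∑ ε : Fin n → Bool, chi K₀ ε • ∑ K : Finset (Fin n), chi K ε • T K = 0 := by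
      simp only [hT, key, smul_zero, Finset.sum_const_zero]
    calc ((2:ℝ)^n) • T K₀
        = ∑ K : Finset (Fin n), (if K = K₀ then ((2:ℝ)^n) • T K else 0) := by
          rw [Finset.sum_ite_eq' Finset.univ K₀ (fun K => ((2:ℝ)^n) • T K)]
          simp
      _ = ∑ K : Finset (Fin n), (∑ ε : Fin n → Bool, chi K₀ ε * chi K ε) • T K := by
          refine Finset.sum_congr rfl fun K _ => ?_
          simp only [chi_mul, chi_orth]
          by_cases hK : K = K₀
          · subst hK
            rw [if_pos rfl, if_pos (by simp [symmDiff_eq_bot])]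
          · rw [if_neg hK, if_neg, zero_smul]
            rw [← Finset.bot_eq_empty]
            intro h
            exact hK (symmDiff_eq_bot.mp h).symm
      _ = ∑ K : Finset (Fin n), ∑ ε : Fin n → Bool, (chi K₀ ε * chi K ε) • T K := by
          simp only [Finset.sum_smul]
      _ = ∑ ε : Fin n → Bool, chi K₀ ε • ∑ K : Finset (Fin n), chi K ε • T K := by
          rw [Finset.sum_comm]
          simp only [Finset.smul_sum, smul_smul]
      _ = 0 := this0
  have h4 : JK (fun _ => iq) K₀ * G K₀ = 0 := by
    have h2 : ((2:ℝ)^n) ≠ 0 := by positivity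
    exact (smul_eq_zero.mp main).resolve_left h2
  have h5 : G K₀ = 0 := by
    rcases mul_eq_zero.mp h4 with h | h
    · exact absurd h (JK_const_iq_ne_zero K₀)
    · exact h
  exact sub_eq_zero.mp h5

/-- embedding of ℂ into the slice of J -/
def sl (J : ℍ) (w : ℂ) : ℍ := w.re • (1:ℍ) + w.im • J

lemma sl_one (J : ℍ) : sl J 1 = 1 := by simp [sl]

lemma sl_mul (J : ℍ) (hJ : J ∈ Sph) (w w' : ℂ) : sl J (w * w') = sl J w * sl J w' := by
  have hJJ : J * J = -1 := by rw [← sq]; exact hJ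
  simp only [sl, Complex.mul_re, Complex.mul_im, add_mul, mul_add, smul_mul_smul_comm,
    one_mul, mul_one, hJJ, sub_smul, add_smul, smul_neg, smul_smul]
  module

lemma sl_pow (J : ℍ) (hJ : J ∈ Sph) (w : ℂ) (k : ℕ) : sl J (w ^ k) = (sl J w) ^ k := by
  induction k with
  | zero => simp [sl_one]
  | succ k ih => rw [pow_succ, pow_succ, sl_mul J hJ, ih]

lemma list_expand (c : Fin n → ℝ) (d : Fin n → ℍ) :
    ∀ l : List (Fin n), l.Nodup →
      (l.map fun h => c h • (1:ℍ) + d h).prod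
        = ∑ S ∈ l.toFinset.powerset,
            (∏ h ∈ l.toFinset \ S, c h) • ((l.filter (· ∈ S)).map d).prod := by
  intro l
  induction l with
  | nil => simp
  | cons a t ih =>
    intro hnd
    have ha : a ∉ t := (List.nodup_cons.mp hnd).1
    have haF : a ∉ t.toFinset := by simpa using ha
    have ht : t.Nodup := (List.nodup_cons.mp hnd).2
    rw [List.map_cons, List.prod_cons, ih ht, List.toFinset_cons,
      Finset.sum_powerset_insert haF]
    rw [add_mul, smul_mul_assoc, one_mul, Finset.mul_sum, Finset.smul_sum]
    congr 1
    · refine Finset.sum_congr rfl fun S hS => ?_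
      have haS : a ∉ S := fun h => haF (Finset.mem_powerset.mp hS h)
      have h1 : (insert a t.toFinset) \ S = insert a (t.toFinset \ S) := by
        rw [Finset.insert_sdiff_of_notMem _ haS]
      have h2 : List.filter (fun h => decide (h ∈ S)) (a :: t)
          = List.filter (fun h => decide (h ∈ S)) t := by
        rw [List.filter_cons, if_neg (by simpa using haS)]
      rw [h1, Finset.prod_insert (fun hmem => haF (Finset.mem_sdiff.mp hmem).1), h2, mul_smul]
    · refine Finset.sum_congr rfl fun S hS => ?_
      have hSt : S ⊆ t.toFinset := Finset.mem_powerset.mp hS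
      have h1 : (insert a t.toFinset) \ (insert a S) = t.toFinset \ S := by
        rw [Finset.insert_sdiff_insert]
        ext x
        simp only [Finset.mem_sdiff, Finset.mem_insert]
        constructor
        · rintro ⟨hx, h⟩
          exact ⟨hx, fun hs => h (Or.inr hs)⟩
        · rintro ⟨hx, h⟩
          exact ⟨hx, fun hs => hs.elim (fun e => haF (e ▸ hx)) h⟩
      have h2 : List.filter (fun h => decide (h ∈ insert a S)) (a :: t)
          = a :: List.filter (fun h => decide (h ∈ S)) t := by
        rw [List.filter_cons, if_pos (by simp)]
        congr 1
        refine List.filter_congr fun x hx => ?_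
        have : x ≠ a := fun h => ha (h ▸ hx)
        simp [Finset.mem_insert, this]
      rw [h1, h2, List.map_cons, List.prod_cons, mul_smul_comm]

lemma sort_eq_filter (K : Finset (Fin n)) :
    K.sort (· ≤ ·) = (List.finRange n).filter (· ∈ K) := by
  refine (fun hp hs => List.Perm.eq_of_pairwise' (Finset.pairwise_sort _ _) hs hp) ?_ ?_
  · refine List.perm_of_nodup_nodup_toFinset_eq (Finset.sort_nodup _ _)
      ((List.nodup_finRange n).filter _) ?_
    rw [Finset.sort_toFinset]
    ext x
    simp [List.mem_filter]
  · exact List.Pairwise.filter _ (List.pairwise_le_finRange n)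

/-- real coefficient: product of re's outside K and im's inside K -/
def PP (K : Finset (Fin n)) (w : Fin n → ℂ) : ℝ :=
  ∏ h : Fin n, (if h ∈ K then (w h).im else (w h).re)

/-- the monomial stem function -/
def MF (ℓ : Fin n → ℕ) (a : ℍ) : Finset (Fin n) → (Fin n → ℂ) → ℍ :=
  fun K z => PP K (fun h => z h ^ ℓ h) • a

lemma PP_split (K : Finset (Fin n)) (w : Fin n → ℂ) :
    PP K w = (∏ h ∈ Finset.univ \ K, (w h).re) * ∏ h ∈ K, (w h).im := by
  rw [PP, Finset.prod_ite]
  rw [Finset.filter_univ_mem]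
  have : Finset.filter (fun h => h ∉ K) Finset.univ = Finset.univ \ K := by
    ext x; simp
  rw [this, mul_comm]

lemma MF_induces (D : Set (Fin n → ℂ)) (ℓ : Fin n → ℕ) (a : ℍ) :
    Induces D (MF ℓ a) (mono ℓ a) := by
  intro α β J hJ _hz
  set w : Fin n → ℂ := fun h => zOf α β h ^ ℓ h with hw
  have hpt : ∀ h, ptOf α β J h = sl (J h) (zOf α β h) := by
    intro h
    simp only [ptOf, sl, zOf]
    have hre : ((α h : ℂ) + (β h : ℂ) * Complex.I).re = α h := by simp
    have him : ((α h : ℂ) + (β h : ℂ) * Complex.I).im = β h := by simp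
    rw [hre, him, Quaternion.coe_mul_eq_smul]
    congr 1
    rw [← mul_one ((α h : ℍ)), Quaternion.coe_mul_eq_smul]
  have hprod : (List.ofFn fun h => ptOf α β J h ^ ℓ h).prod
      = ∑ S : Finset (Fin n), PP S w • JK J S := by
    have h1 : (List.ofFn fun h => ptOf α β J h ^ ℓ h)
        = (List.finRange n).map fun h => (w h).re • (1:ℍ) + ((w h).im • J h) := by
      rw [List.ofFn_eq_map]
      refine List.map_congr_left fun h _ => ?_
      rw [hpt h, ← sl_pow (J h) (hJ h), sl]
    rw [h1, list_expand (fun h => (w h).re) (fun h => (w h).im • J h) _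
      (List.nodup_finRange n)]
    rw [List.toFinset_finRange, Finset.powerset_univ]
    refine Finset.sum_congr rfl fun S _ => ?_
    rw [← sort_eq_filter, list_prod_smul (fun h => (w h).im) J, list_prod_real, ← JK]
    rw [smul_smul, ← PP_split]
  show mono ℓ a (ptOf α β J) = _
  rw [mono, hprod, Finset.sum_mul]
  refine Finset.sum_congr rfl fun S _ => ?_
  rw [MF, smul_mul_assoc, mul_smul_comm]

def E (b : Bool) (w : ℂ) : ℝ := if b then w.im else w.re

/-- the Finset encoded by a Bool vector -/
def feq : (Fin n → Bool) ≃ Finset (Fin n) where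
  toFun ε := Finset.univ.filter (fun h => ε h = true)
  invFun S := fun h => decide (h ∈ S)
  left_inv ε := by funext h; simp
  right_inv S := by ext h; simp

lemma mem_feq (ε : Fin n → Bool) (h : Fin n) : h ∈ feq ε ↔ ε h = true := by
  simp [feq]

lemma prod_ite_zero {ι : Type*} (s : Finset ι) (p : ι → Prop) [DecidablePred p] (f : ι → ℝ) :
    (∏ h ∈ s, if p h then f h else 0) = if (∀ h ∈ s, p h) then ∏ h ∈ s, f h else 0 := by
  by_cases hp : ∀ h ∈ s, p h
  · rw [if_pos hp]
    exact Finset.prod_congr rfl fun h hh => if_pos (hp h hh)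
  · rw [if_neg hp]
    push_neg at hp
    obtain ⟨h₀, hh₀, hp₀⟩ := hp
    exact Finset.prod_eq_zero hh₀ (if_neg hp₀)

lemma sigmaT_feq (ε1 ε2 : Fin n → Bool) :
    sigmaT (feq ε1) (feq ε2) = ∏ h : Fin n, (if ε1 h && ε2 h then (-1:ℝ) else 1) := by
  rw [sigmaT]
  have h1 : feq ε1 ∩ feq ε2 = Finset.univ.filter (fun h => ε1 h && ε2 h) := by
    ext x
    simp [mem_feq, Finset.mem_filter, feq]
  rw [h1, ← Finset.prod_const (b := (-1:ℝ)), ← Fintype.prod_ite_mem]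
  exact Finset.prod_congr rfl fun h _ => by simp [Finset.mem_filter]

lemma PP_feq (ε : Fin n → Bool) (u : Fin n → ℂ) :
    PP (feq ε) u = ∏ h : Fin n, E (ε h) (u h) := by
  rw [PP]
  refine Finset.prod_congr rfl fun h _ => ?_
  by_cases hb : ε h = true <;> simp [mem_feq, hb, E]

lemma symmDiff_feq (ε1 ε2 : Fin n → Bool) (K : Finset (Fin n)) :
    symmDiff (feq ε1) (feq ε2) = K ↔ ∀ h, xor (ε1 h) (ε2 h) = decide (h ∈ K) := by
  rw [Finset.ext_iff]
  refine forall_congr' fun h => ?_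
  rw [Finset.mem_symmDiff, mem_feq, mem_feq]
  cases h1 : ε1 h <;> cases h2 : ε2 h <;> by_cases hK : h ∈ K <;> simp [h1, h2, hK]

lemma PP_star (K : Finset (Fin n)) (u v : Fin n → ℂ) :
    (∑ H : Finset (Fin n), ∑ L : Finset (Fin n),
      if symmDiff H L = K then sigmaT H L * (PP H u * PP L v) else 0)
    = PP K (fun h => u h * v h) := by
  -- encode the double sum by Bool vectors
  have lhs_eq : (∑ H : Finset (Fin n), ∑ L : Finset (Fin n),
      if symmDiff H L = K then sigmaT H L * (PP H u * PP L v) else 0)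
    = ∑ ε1 : Fin n → Bool, ∑ ε2 : Fin n → Bool,
        if (∀ h, xor (ε1 h) (ε2 h) = decide (h ∈ K)) then
          ∏ h : Fin n, ((if ε1 h && ε2 h then (-1:ℝ) else 1) * E (ε1 h) (u h) * E (ε2 h) (v h))
        else 0 := by
    rw [← Equiv.sum_comp feq (fun H => ∑ L : Finset (Fin n),
      if symmDiff H L = K then sigmaT H L * (PP H u * PP L v) else 0)]
    refine Finset.sum_congr rfl fun ε1 _ => ?_
    rw [← Equiv.sum_comp feq (fun L =>
      if symmDiff (feq ε1) L = K then sigmaT (feq ε1) L * (PP (feq ε1) u * PP L v) else 0)]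
    refine Finset.sum_congr rfl fun ε2 _ => ?_
    by_cases hc : symmDiff (feq ε1) (feq ε2) = K
    · rw [if_pos hc, if_pos ((symmDiff_feq ε1 ε2 K).mp hc)]
      rw [sigmaT_feq, PP_feq, PP_feq, ← Finset.prod_mul_distrib, ← Finset.prod_mul_distrib]
      exact Finset.prod_congr rfl fun x _ => (mul_assoc _ _ _).symm
    · rw [if_neg hc, if_neg (fun hh => hc ((symmDiff_feq ε1 ε2 K).mpr hh))]
  rw [lhs_eq]
  -- expand the right-hand side
  have rhs_eq : PP K (fun h => u h * v h)
      = ∑ ε : Fin n → Bool × Bool, ∏ h : Fin n,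
          (if xor (ε h).1 (ε h).2 = decide (h ∈ K) then
            (if (ε h).1 && (ε h).2 then (-1:ℝ) else 1) * E (ε h).1 (u h) * E (ε h).2 (v h)
          else 0) := by
    have step1 : PP K (fun h => u h * v h) = ∏ h : Fin n, ∑ p : Bool × Bool,
        (if xor p.1 p.2 = decide (h ∈ K) then
          (if p.1 && p.2 then (-1:ℝ) else 1) * E p.1 (u h) * E p.2 (v h)
        else 0) := by
      rw [PP]
      refine Finset.prod_congr rfl fun h _ => ?_
      rw [Fintype.sum_prod_type, Fintype.sum_bool, Fintype.sum_bool, Fintype.sum_bool]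
      by_cases hK : h ∈ K <;>
        simp [hK, E, Complex.mul_re, Complex.mul_im] <;> ring
    rw [step1]
    exact Fintype.prod_sum (fun (h : Fin n) (p : Bool × Bool) =>
      (if xor p.1 p.2 = decide (h ∈ K) then
        (if p.1 && p.2 then (-1:ℝ) else 1) * E p.1 (u h) * E p.2 (v h)
      else 0))
  rw [rhs_eq]
  rw [← Equiv.sum_comp (Equiv.arrowProdEquivProdArrow (Fin n) (fun _ => Bool) (fun _ => Bool)).symm
    (fun ε : Fin n → Bool × Bool => ∏ h : Fin n,
      (if xor (ε h).1 (ε h).2 = decide (h ∈ K) then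
        (if (ε h).1 && (ε h).2 then (-1:ℝ) else 1) * E (ε h).1 (u h) * E (ε h).2 (v h)
      else 0))]
  rw [Fintype.sum_prod_type]
  refine Finset.sum_congr rfl fun ε1 _ => Finset.sum_congr rfl fun ε2 _ => ?_
  show _ = ∏ h : Fin n,
      (if xor (ε1 h) (ε2 h) = decide (h ∈ K) then
        (if ε1 h && ε2 h then (-1:ℝ) else 1) * E (ε1 h) (u h) * E (ε2 h) (v h)
      else 0)
  rw [prod_ite_zero Finset.univ (fun h => xor (ε1 h) (ε2 h) = decide (h ∈ K))]
  simp

lemma SPT_MF (ℓ m : Fin n → ℕ) (a b : ℍ) (K : Finset (Fin n)) (z : Fin n → ℂ) :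
    SPT (MF ℓ a) (MF m b) K z = MF (ℓ + m) (a * b) K z := by
  set u : Fin n → ℂ := fun h => z h ^ ℓ h with hu
  set v : Fin n → ℂ := fun h => z h ^ m h with hv
  rw [SPT, SP]
  have step : ∀ H L : Finset (Fin n),
      (if symmDiff H L = K then sigmaT H L • (MF ℓ a H z * MF m b L z) else 0)
      = (if symmDiff H L = K then sigmaT H L * (PP H u * PP L v) else 0) • (a * b) := by
    intro H L
    by_cases hc : symmDiff H L = K
    · rw [if_pos hc, if_pos hc, MF, MF, smul_mul_smul_comm, smul_smul]
    · rw [if_neg hc, if_neg hc, zero_smul]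
  simp_rw [step]
  simp_rw [← Finset.sum_smul]
  rw [PP_star K u v, MF]
  congr 1
  rw [PP, PP]
  refine Finset.prod_congr rfl fun h _ => ?_
  have : u h * v h = z h ^ (ℓ + m) h := by
    rw [hu, hv, Pi.add_apply, pow_add]
  rw [this]

lemma SP_congr (σ : Finset (Fin n) → Finset (Fin n) → ℝ)
    {F F' G G' : Finset (Fin n) → (Fin n → ℂ) → ℍ} (z : Fin n → ℂ)
    (hF : ∀ H, F H z = F' H z) (hG : ∀ L, G L z = G' L z) (K : Finset (Fin n)) :
    SP σ F G K z = SP σ F' G' K z := by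
  rw [SP, SP]
  refine Finset.sum_congr rfl fun H _ => Finset.sum_congr rfl fun L _ => ?_
  rw [hF, hG]

lemma Induces_sum {ι : Type*} {D : Set (Fin n → ℂ)} (P : Finset ι)
    (Fp : ι → Finset (Fin n) → (Fin n → ℂ) → ℍ) (fp : ι → (Fin n → ℍ) → ℍ)
    (h : ∀ p ∈ P, Induces D (Fp p) (fp p)) :
    Induces D (fun K z => ∑ p ∈ P, Fp p K z) (fun x => ∑ p ∈ P, fp p x) := by
  intro α β J hJ hz
  calc ∑ p ∈ P, fp p (ptOf α β J)
      = ∑ p ∈ P, ∑ K : Finset (Fin n), JK J K * Fp p K (zOf α β) :=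
        Finset.sum_congr rfl fun p hp => h p hp α β J hJ hz
    _ = ∑ K : Finset (Fin n), ∑ p ∈ P, JK J K * Fp p K (zOf α β) := by
        rw [Finset.sum_comm]
    _ = ∑ K : Finset (Fin n), JK J K * ∑ p ∈ P, Fp p K (zOf α β) := by
        simp_rw [Finset.mul_sum]

lemma SP_apply_sum {ι κ : Type*} (σ : Finset (Fin n) → Finset (Fin n) → ℝ)
    (P : Finset ι) (Q : Finset κ)
    (Fp : ι → Finset (Fin n) → (Fin n → ℂ) → ℍ)
    (Gq : κ → Finset (Fin n) → (Fin n → ℂ) → ℍ)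
    (K : Finset (Fin n)) (z : Fin n → ℂ) :
    SP σ (fun K z => ∑ p ∈ P, Fp p K z) (fun K z => ∑ q ∈ Q, Gq q K z) K z
      = ∑ p ∈ P, ∑ q ∈ Q, SP σ (Fp p) (Gq q) K z := by
  rw [SP]
  have step : ∀ H L : Finset (Fin n),
      (if symmDiff H L = K then σ H L • ((∑ p ∈ P, Fp p H z) * (∑ q ∈ Q, Gq q L z)) else 0)
      = ∑ p ∈ P, ∑ q ∈ Q,
          (if symmDiff H L = K then σ H L • (Fp p H z * Gq q L z) else 0) := by
    intro H L
    by_cases hc : symmDiff H L = K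
    · simp only [if_pos hc, Finset.sum_mul_sum, Finset.smul_sum]
    · simp only [if_neg hc, Finset.sum_const_zero]
  simp_rw [step]
  set t : Finset (Fin n) → Finset (Fin n) → ι → κ → ℍ := fun H L p q =>
    if symmDiff H L = K then σ H L • (Fp p H z * Gq q L z) else 0 with ht
  calc ∑ H : Finset (Fin n), ∑ L : Finset (Fin n), ∑ p ∈ P, ∑ q ∈ Q, t H L p q
      = ∑ H : Finset (Fin n), ∑ p ∈ P, ∑ L : Finset (Fin n), ∑ q ∈ Q, t H L p q :=
        Finset.sum_congr rfl fun H _ => Finset.sum_comm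
    _ = ∑ p ∈ P, ∑ H : Finset (Fin n), ∑ L : Finset (Fin n), ∑ q ∈ Q, t H L p q :=
        Finset.sum_comm
    _ = ∑ p ∈ P, ∑ H : Finset (Fin n), ∑ q ∈ Q, ∑ L : Finset (Fin n), t H L p q :=
        Finset.sum_congr rfl fun p _ => Finset.sum_congr rfl fun H _ => Finset.sum_comm
    _ = ∑ p ∈ P, ∑ q ∈ Q, ∑ H : Finset (Fin n), ∑ L : Finset (Fin n), t H L p q :=
        Finset.sum_congr rfl fun p _ => Finset.sum_comm
    _ = ∑ p ∈ P, ∑ q ∈ Q, SP σ (Fp p) (Gq q) K z := by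
        refine Finset.sum_congr rfl fun p _ => Finset.sum_congr rfl fun q _ => ?_
        rw [SP]

end Stmt18Aux
-- AUX END
open Stmt18Aux

/-- The slice tensor product of monomials (and hence of
polynomials) coincides with their star product. -/
theorem stmt18 (n : ℕ) (hn : 0 < n) (D : Set (Fin n → ℂ)) (hne : D.Nonempty)
    (hinv : ConjInv D) (hD : IsOpen D) :
    (∀ (ℓ m : Fin n → ℕ) (a b : ℍ) (F G : Finset (Fin n) → (Fin n → ℂ) → ℍ),
      IsStem D F → Induces D F (mono ℓ a) →
      IsStem D G → Induces D G (mono m b) →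
      Induces D (SPT F G) (mono (ℓ + m) (a * b))) ∧
    (∀ (P Q : Finset (Fin n → ℕ)) (a b : (Fin n → ℕ) → ℍ)
        (F G : Finset (Fin n) → (Fin n → ℂ) → ℍ),
      IsStem D F → Induces D F (fun x => ∑ p ∈ P, mono p (a p) x) →
      IsStem D G → Induces D G (fun x => ∑ q ∈ Q, mono q (b q) x) →
      Induces D (SPT F G) (fun x => ∑ p ∈ P, ∑ q ∈ Q, mono (p + q) (a p * b q) x)) := by
  open Stmt18Aux in
  constructor
  · intro ℓ m a b F G _hFs hFi _hGs hGi
    intro α β J hJ hz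
    rw [MF_induces D (ℓ + m) (a * b) α β J hJ hz]
    refine Finset.sum_congr rfl fun K _ => ?_
    congr 1
    rw [← SPT_MF ℓ m a b K (zOf α β), SPT, SPT]
    exact (SP_congr sigmaT (zOf α β)
      (fun H => induces_unique hFi (MF_induces D ℓ a) α β hz H)
      (fun L => induces_unique hGi (MF_induces D m b) α β hz L) K).symm
  · intro P Q a b F G _hFs hFi _hGs hGi
    have hFs_ind : Induces D (fun K z => ∑ p ∈ P, MF p (a p) K z)
        (fun x => ∑ p ∈ P, mono p (a p) x) :=
      Induces_sum P _ _ (fun p _ => MF_induces D p (a p))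
    have hGs_ind : Induces D (fun K z => ∑ q ∈ Q, MF q (b q) K z)
        (fun x => ∑ q ∈ Q, mono q (b q) x) :=
      Induces_sum Q _ _ (fun q _ => MF_induces D q (b q))
    have htarget : Induces D
        (fun K z => ∑ p ∈ P, ∑ q ∈ Q, MF (p + q) (a p * b q) K z)
        (fun x => ∑ p ∈ P, ∑ q ∈ Q, mono (p + q) (a p * b q) x) :=
      Induces_sum P _ _ (fun p _ =>
        Induces_sum Q _ _ (fun q _ => MF_induces D (p + q) (a p * b q)))
    intro α β J hJ hz
    rw [htarget α β J hJ hz]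
    refine Finset.sum_congr rfl fun K _ => ?_
    congr 1
    symm
    calc SPT F G K (zOf α β)
        = SP sigmaT (fun K z => ∑ p ∈ P, MF p (a p) K z)
            (fun K z => ∑ q ∈ Q, MF q (b q) K z) K (zOf α β) := by
          rw [SPT]
          exact SP_congr sigmaT (zOf α β)
            (fun H => induces_unique hFi hFs_ind α β hz H)
            (fun L => induces_unique hGi hGs_ind α β hz L) K
      _ = ∑ p ∈ P, ∑ q ∈ Q, SP sigmaT (MF p (a p)) (MF q (b q)) K (zOf α β) :=
          SP_apply_sum sigmaT P Q _ _ K (zOf α β)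
      _ = ∑ p ∈ P, ∑ q ∈ Q, MF (p + q) (a p * b q) K (zOf α β) :=
          Finset.sum_congr rfl fun p _ => Finset.sum_congr rfl fun q _ =>
            SPT_MF p q (a p) (b q) K (zOf α β)
end
end

section
/- Let f : ℍⁿ → ℍ be a polynomial function, f(x) = ∑_{ℓ∈L} x^ℓ a_ℓ for a finite set L ⊆ ℕⁿ and coefficients a_ℓ ∈ ℍ, and assume f is not a constant function. Then the zero set V(f) = {x ∈ ℍⁿ : f(x) = 0} is nonempty. -/
noncomputable section

variable {n : ℕ}

namespace Stmt19Aux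
open Quaternion Finset

lemma phi_apply (I : ℍ) (hI : I * I = -1) (z : ℂ) :
    Complex.liftAux I hI z = ((z.re : ℝ) : ℍ) + ((z.im : ℝ) : ℍ) * I := by
  rw [Complex.liftAux_apply, Quaternion.coe_mul_eq_smul]
  rfl

lemma imaginary_unit (u : ℍ) (hre : u.re = 0) (hn : normSq u = 1) : u * u = -1 := by
  have hstar : star u = -u := QuaternionAlgebra.star_eq_neg.mpr hre
  have h := Quaternion.self_mul_star (a := u)
  rw [hstar, mul_neg, hn] at h
  have : u * u = -((1:ℝ) : ℍ) := by rw [← h, neg_neg]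
  simpa using this

lemma conj_pow (u x : ℍ) (hu : u ≠ 0) (l : ℕ) : (u⁻¹ * x * u) ^ l = u⁻¹ * x ^ l * u := by
  induction l with
  | zero => simp [inv_mul_cancel₀ hu]
  | succ m ih =>
    rw [pow_succ, ih, pow_succ]
    have : u⁻¹ * x ^ m * u * (u⁻¹ * x * u) = u⁻¹ * x ^ m * ((u * u⁻¹) * x) * u := by
      simp only [mul_assoc]
    rw [this, mul_inv_cancel₀ hu, one_mul, mul_assoc u⁻¹ (x ^ m) x]

lemma all_real_prod : ∀ (n : ℕ) (s : Fin n → ℝ) (w : Fin n → ℍ),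
    (List.ofFn fun h => (s h : ℍ) * w h).prod = ((∏ h, s h : ℝ) : ℍ) * (List.ofFn w).prod := by
  intro n
  induction n with
  | zero => intro s w; simp
  | succ m ih =>
    intro s w
    rw [List.ofFn_succ, List.prod_cons, List.ofFn_succ (f := w), List.prod_cons,
      ih (fun i : Fin m => s (Fin.succ i)) (fun i : Fin m => w (Fin.succ i)), Fin.prod_univ_succ, Quaternion.coe_mul]
    have c1 : w 0 * ((∏ i : Fin m, s (Fin.succ i) : ℝ) : ℍ) = ((∏ i : Fin m, s (Fin.succ i) : ℝ) : ℍ) * w 0 :=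
      (Quaternion.coe_commutes _ _).symm
    rw [mul_assoc (s 0 : ℍ), ← mul_assoc (w 0), c1, mul_assoc, ← mul_assoc (s 0 : ℍ)]

lemma one_spot_prod : ∀ (n : ℕ) (w : Fin n → ℍ) (k : Fin n),
    (∀ h, h ≠ k → w h = 1) → (List.ofFn w).prod = w k := by
  intro n
  induction n with
  | zero => exact fun w k => k.elim0
  | succ m ih =>
    intro w k hw
    rw [List.ofFn_succ, List.prod_cons]
    cases k using Fin.cases with
    | zero =>
      have : ∀ x ∈ List.ofFn (fun i : Fin m => w i.succ), x = 1 := by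
        intro x hx
        obtain ⟨i, rfl⟩ := List.mem_ofFn.mp hx
        exact hw _ (Fin.succ_ne_zero i)
      rw [List.prod_eq_one this, mul_one]
    | succ j =>
      rw [hw 0 (Fin.succ_ne_zero j).symm, one_mul]
      exact ih (fun i => w i.succ) j (fun i hij => hw i.succ (by simpa using hij))


lemma right_eval_slice (I : ℍ) (hI : I * I = -1) (z : ℂ) (D : ℕ) (c : ℕ → ℍ) :
    ∑ m ∈ Finset.range (D + 1), (Complex.liftAux I hI z) ^ m * c m
      = (∑ m ∈ Finset.range (D + 1), (((z ^ m).re : ℝ) : ℍ) * c m)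
        + I * (∑ m ∈ Finset.range (D + 1), (((z ^ m).im : ℝ) : ℍ) * c m) := by
  rw [Finset.mul_sum, ← Finset.sum_add_distrib]
  refine Finset.sum_congr rfl fun m _ => ?_
  rw [← map_pow, phi_apply, add_mul]
  congr 1
  rw [mul_assoc, Quaternion.coe_commutes ((z ^ m).im) (I * c m), mul_assoc,
    ← Quaternion.coe_commutes]

lemma left_eval_slice (I : ℍ) (hI : I * I = -1) (z : ℂ) (D : ℕ) (c : ℕ → ℍ) :
    ∑ m ∈ Finset.range (D + 1), c m * (Complex.liftAux I hI z) ^ m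
      = (∑ m ∈ Finset.range (D + 1), (((z ^ m).re : ℝ) : ℍ) * c m)
        + (∑ m ∈ Finset.range (D + 1), (((z ^ m).im : ℝ) : ℍ) * c m) * I := by
  rw [Finset.sum_mul, ← Finset.sum_add_distrib]
  refine Finset.sum_congr rfl fun m _ => ?_
  rw [← map_pow, phi_apply, mul_add]
  congr 1
  · exact (Quaternion.coe_commutes _ _).symm
  · rw [← mul_assoc, Quaternion.coe_commutes ((z ^ m).im) (c m), mul_assoc, ← mul_assoc]


lemma left_root_to_right_root (D : ℕ) (c : ℕ → ℍ) (w : ℍ)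
    (hw : ∑ l ∈ Finset.range (D + 1), c l * w ^ l = 0) :
    ∃ q : ℍ, ∑ m ∈ Finset.range (D + 1), q ^ m * c m = 0 := by
  by_cases him : w.im = 0
  · refine ⟨w, ?_⟩
    have hwr : w = ((w.re : ℝ) : ℍ) := by
      conv_lhs => rw [← Quaternion.re_add_im w, him]
      rw [add_zero]
    rw [← hw]
    refine Finset.sum_congr rfl fun m _ => ?_
    rw [hwr, ← Quaternion.coe_pow]
    exact Quaternion.coe_commutes _ _
  · set β : ℝ := ‖w.im‖ with hβdef
    have hβ : β ≠ 0 := norm_ne_zero_iff.mpr him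
    set I : ℍ := β⁻¹ • w.im with hIdef
    have hIre : I.re = 0 := by
      rw [hIdef, Quaternion.re_smul, Quaternion.re_im, smul_zero]
    have hIns : normSq I = 1 := by
      rw [hIdef, Quaternion.normSq_smul, Quaternion.normSq_eq_norm_mul_self]
      rw [sq]
      field_simp
      rw [hβdef]
    have hI : I * I = -1 := imaginary_unit I hIre hIns
    set ζ : ℂ := ⟨w.re, β⟩ with hζdef
    have hφζ : Complex.liftAux I hI ζ = w := by
      rw [phi_apply, Quaternion.coe_mul_eq_smul, hIdef, smul_smul, mul_inv_cancel₀ hβ, one_smul]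
      exact Quaternion.re_add_im w
    rw [← hφζ, left_eval_slice] at hw
    set A : ℍ := ∑ m ∈ Finset.range (D + 1), (((ζ ^ m).re : ℝ) : ℍ) * c m with hA
    set B : ℍ := ∑ m ∈ Finset.range (D + 1), (((ζ ^ m).im : ℝ) : ℍ) * c m with hB
    by_cases hBz : B = 0
    · refine ⟨Complex.liftAux I hI ζ, ?_⟩
      rw [right_eval_slice, ← hA, ← hB, hBz, mul_zero, add_zero]
      rw [hBz, zero_mul, add_zero] at hw
      exact hw
    · have hJ : (B * I * B⁻¹) * (B * I * B⁻¹) = -1 := by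
        have : (B * I * B⁻¹) * (B * I * B⁻¹) = B * (I * (B⁻¹ * B) * I) * B⁻¹ := by
          simp only [mul_assoc]
        rw [this, inv_mul_cancel₀ hBz, mul_one, hI, mul_neg_one, neg_mul,
          mul_inv_cancel₀ hBz]
      refine ⟨Complex.liftAux (B * I * B⁻¹) hJ ζ, ?_⟩
      rw [right_eval_slice, ← hA, ← hB]
      have hJB : (B * I * B⁻¹) * B = B * I := by
        rw [mul_assoc, inv_mul_cancel₀ hBz, mul_one]
      rw [hJB]
      exact hw


lemma eval_real_coeff (I : ℍ) (hI : I * I = -1) (z : ℂ) (D : ℕ) (ρ : ℕ → ℕ → ℝ) :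
    Complex.liftAux I hI ((∑ k ∈ Finset.range (D + 1), ∑ l ∈ Finset.range (D + 1),
        Polynomial.C ((ρ k l : ℝ) : ℂ) * Polynomial.X ^ (k + l)).eval z)
      = ∑ k ∈ Finset.range (D + 1), ∑ l ∈ Finset.range (D + 1),
          (Complex.liftAux I hI z) ^ (k + l) * ((ρ k l : ℝ) : ℍ) := by
  rw [Polynomial.eval_finset_sum, map_sum]
  refine Finset.sum_congr rfl fun k _ => ?_
  rw [Polynomial.eval_finset_sum, map_sum]
  refine Finset.sum_congr rfl fun l _ => ?_
  rw [Polynomial.eval_mul, Polynomial.eval_C, Polynomial.eval_pow, Polynomial.eval_X,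
    map_mul, map_pow]
  have h1 : Complex.liftAux I hI ((ρ k l : ℝ) : ℂ) = ((ρ k l : ℝ) : ℍ) := by
    rw [show ((ρ k l : ℝ) : ℂ) = algebraMap ℝ ℂ (ρ k l) from rfl, AlgHom.commutes]
    rfl
  rw [h1, Quaternion.coe_commutes]


lemma one_var (D : ℕ) (c : ℕ → ℍ) (m₀ : ℕ) (hm1 : 1 ≤ m₀) (hmD : m₀ ≤ D) (hc : c m₀ ≠ 0) :
    ∃ q : ℍ, ∑ m ∈ Finset.range (D + 1), q ^ m * c m = 0 := by
  classical
  set S : Finset ℕ := (Finset.range (D + 1)).filter (fun m => c m ≠ 0) with hS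
  have hm₀S : m₀ ∈ S := Finset.mem_filter.mpr ⟨Finset.mem_range.mpr (by omega), hc⟩
  have hSne : S.Nonempty := ⟨m₀, hm₀S⟩
  set d : ℕ := S.max' hSne with hd
  have hdS : d ∈ S := S.max'_mem hSne
  have hcd : c d ≠ 0 := (Finset.mem_filter.mp hdS).2
  have hdD : d ≤ D := Nat.lt_succ_iff.mp (Finset.mem_range.mp (Finset.mem_filter.mp hdS).1)
  have hd1 : 1 ≤ d := le_trans hm1 (Finset.le_max' S m₀ hm₀S)
  have hbig : ∀ m, m ≤ D → d < m → c m = 0 := by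
    intro m hmD' hdm
    by_contra hme
    exact absurd (Finset.le_max' S m
      (Finset.mem_filter.mpr ⟨Finset.mem_range.mpr (by omega), hme⟩)) (by omega)
  set ρ : ℕ → ℕ → ℝ := fun k l => (c k * star (c l)).re with hρ
  have hρzero : ∀ k l, k ≤ D → l ≤ D → k + l = 2 * d → k ≠ d → ρ k l = 0 := by
    intro k l hk hl hkl hne
    rcases lt_or_gt_of_ne hne with hlt | hgt
    · have : c l = 0 := hbig l hl (by omega)
      simp [hρ, this]
    · have : c k = 0 := hbig k hk hgt
      simp [hρ, this]
  set P : Polynomial ℂ := ∑ k ∈ Finset.range (D + 1), ∑ l ∈ Finset.range (D + 1),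
      Polynomial.C ((ρ k l : ℝ) : ℂ) * Polynomial.X ^ (k + l) with hP
  have hcoeff : P.coeff (2 * d) = ((ρ d d : ℝ) : ℂ) := by
    rw [hP]
    simp only [Polynomial.finset_sum_coeff, Polynomial.coeff_C_mul, Polynomial.coeff_X_pow,
      mul_ite, mul_one, mul_zero]
    rw [Finset.sum_eq_single d]
    · rw [Finset.sum_eq_single d]
      · rw [if_pos (by omega)]
      · intro l hl hne
        rw [if_neg (by omega)]
      · intro hnot
        exact absurd (Finset.mem_range.mpr (by omega)) hnot
    · intro k hk hne
      apply Finset.sum_eq_zero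
      intro l hl
      by_cases hkl : 2 * d = k + l
      · rw [if_pos hkl, hρzero k l (Nat.lt_succ_iff.mp (Finset.mem_range.mp hk))
          (Nat.lt_succ_iff.mp (Finset.mem_range.mp hl)) hkl.symm hne]
        exact Complex.ofReal_zero
      · rw [if_neg hkl]
    · intro hnot
      exact absurd (Finset.mem_range.mpr (by omega)) hnot
  have hρdd : ρ d d ≠ 0 := by
    rw [hρ]
    show (c d * star (c d)).re ≠ 0
    rw [← Quaternion.normSq_def]
    exact Quaternion.normSq_ne_zero.mpr hcd
  have hdeg : 0 < P.degree := by
    have h1 : ((2 * d : ℕ) : WithBot ℕ) ≤ P.degree :=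
      Polynomial.le_degree_of_ne_zero (by rw [hcoeff]; exact_mod_cast hρdd)
    have h0 : (0 : WithBot ℕ) < ((2 * d : ℕ) : WithBot ℕ) := by
      exact_mod_cast (show 0 < 2 * d by omega)
    exact lt_of_lt_of_le h0 h1
  obtain ⟨z₀, hz₀⟩ := Complex.exists_root hdeg
  have hneg1 : ((-1 : ℂ) : ℍ) = -1 := by
    ext <;> simp
  have hi : ((Complex.I : ℂ) : ℍ) * ((Complex.I : ℂ) : ℍ) = -1 := by
    rw [← Quaternion.coeComplex_mul, Complex.I_mul_I, hneg1]
  set x₀ : ℍ := Complex.liftAux ((Complex.I : ℂ) : ℍ) hi z₀ with hx₀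
  have hN : ∑ k ∈ Finset.range (D + 1), ∑ l ∈ Finset.range (D + 1),
      x₀ ^ (k + l) * ((ρ k l : ℝ) : ℍ) = 0 := by
    rw [hx₀, ← eval_real_coeff, ← hP, hz₀.eq_zero, map_zero]
  set Fval : ℍ := ∑ m ∈ Finset.range (D + 1), x₀ ^ m * c m with hFval
  by_cases hF : Fval = 0
  · exact ⟨x₀, by rw [← hFval]; exact hF⟩
  set y : ℍ := Fval⁻¹ * x₀ * Fval with hy
  set M : ℍ := ∑ k ∈ Finset.range (D + 1), ∑ l ∈ Finset.range (D + 1),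
      x₀ ^ (k + l) * (c k * star (c l)) with hM
  have hFG : Fval * (∑ l ∈ Finset.range (D + 1), y ^ l * star (c l)) = M := by
    rw [Finset.mul_sum, hM, Finset.sum_comm]
    refine Finset.sum_congr rfl fun l _ => ?_
    rw [← mul_assoc, hy, conj_pow Fval x₀ hF l, ← mul_assoc, ← mul_assoc,
      mul_inv_cancel₀ hF, one_mul, hFval, Finset.mul_sum, Finset.sum_mul]
    refine Finset.sum_congr rfl fun k _ => ?_
    rw [← mul_assoc, ← mul_assoc, ← pow_add, add_comm l k, mul_assoc]
  have hswap : M = ∑ k ∈ Finset.range (D + 1), ∑ l ∈ Finset.range (D + 1),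
      x₀ ^ (k + l) * (c l * star (c k)) := by
    rw [hM, Finset.sum_comm]
    refine Finset.sum_congr rfl fun k _ => Finset.sum_congr rfl fun l _ => ?_
    rw [add_comm l k]
  have hMM : M + M = ((2 : ℝ) : ℍ) * (∑ k ∈ Finset.range (D + 1), ∑ l ∈ Finset.range (D + 1),
      x₀ ^ (k + l) * ((ρ k l : ℝ) : ℍ)) := by
    nth_rewrite 2 [hswap]
    nth_rewrite 1 [hM]
    rw [Finset.mul_sum, ← Finset.sum_add_distrib]
    refine Finset.sum_congr rfl fun k _ => ?_
    rw [Finset.mul_sum, ← Finset.sum_add_distrib]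
    refine Finset.sum_congr rfl fun l _ => ?_
    rw [← mul_add]
    have hstar : c k * star (c l) + c l * star (c k)
        = ((2 * ρ k l : ℝ) : ℍ) := by
      have := Quaternion.self_add_star' (a := c k * star (c l))
      rw [star_mul, star_star] at this
      rw [this, hρ]
    rw [hstar, Quaternion.coe_mul, ← mul_assoc,
      ← Quaternion.coe_commutes ((2 : ℝ)) (x₀ ^ (k + l)), mul_assoc]
  have hMzero : M = 0 := by
    have h2M : (2 : ℍ) * M = 0 := by
      rw [two_mul, hMM, hN, mul_zero]
    rcases mul_eq_zero.mp h2M with h | h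
    · exfalso
      have hcast : ((2 : ℝ) : ℍ) = 2 := by norm_cast
      rw [← hcast, ← Quaternion.coe_zero] at h
      exact absurd (Quaternion.coe_injective h) two_ne_zero
    · exact h
  have hG : ∑ l ∈ Finset.range (D + 1), y ^ l * star (c l) = 0 := by
    rcases mul_eq_zero.mp (hFG.trans hMzero) with h | h
    · exact absurd h hF
    · exact h
  have hstarG : ∑ l ∈ Finset.range (D + 1), c l * (star y) ^ l = 0 := by
    have := congrArg star hG
    rw [star_sum, star_zero] at this
    have hterm : ∀ (u v : ℍ) (m : ℕ), star (u ^ m * star v) = v * star u ^ m := by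
      intro u v m
      rw [star_mul, star_star, star_pow]
    rw [← this]
    exact Finset.sum_congr rfl fun l _ => (hterm y (c l) l).symm
  exact left_root_to_right_root D c (star y) hstarG


lemma real_indep {n : ℕ} {ι : Type*} (L' : Finset ι) (e : ι → (Fin n → ℕ))
    (he : Set.InjOn e L') (u : ι → ℝ)
    (hz : ∀ t : Fin n → ℝ, ∑ i ∈ L', (∏ h, t h ^ e i h) * u i = 0) :
    ∀ i ∈ L', u i = 0 := by
  classical
  intro i₀ hi₀
  set p : MvPolynomial (Fin n) ℝ :=
    ∑ i ∈ L', MvPolynomial.monomial (Finsupp.equivFunOnFinite.symm (e i)) (u i) with hp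
  have heval : ∀ t : Fin n → ℝ, MvPolynomial.eval t p = 0 := by
    intro t
    rw [hp, map_sum, ← hz t]
    refine Finset.sum_congr rfl fun i _ => ?_
    rw [MvPolynomial.eval_monomial, mul_comm]
    congr 1
    rw [Finsupp.prod_pow]
    exact Finset.prod_congr rfl fun h _ => by simp
  have hp0 : p = 0 := MvPolynomial.funext fun t => by rw [heval, map_zero]
  have hco := congrArg (MvPolynomial.coeff (Finsupp.equivFunOnFinite.symm (e i₀))) hp0
  rw [hp, MvPolynomial.coeff_sum, MvPolynomial.coeff_zero] at hco
  rw [Finset.sum_eq_single i₀] at hco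
  · rwa [MvPolynomial.coeff_monomial, if_pos rfl] at hco
  · intro i hi hne
    rw [MvPolynomial.coeff_monomial, if_neg]
    intro habs
    exact hne (he hi hi₀ (Finsupp.equivFunOnFinite.symm.injective habs))
  · exact fun habs => absurd hi₀ habs

lemma indep {n : ℕ} {ι : Type*} (L' : Finset ι) (e : ι → (Fin n → ℕ))
    (he : Set.InjOn e L') (v : ι → ℍ)
    (hz : ∀ t : Fin n → ℝ, ∑ i ∈ L', ((∏ h, t h ^ e i h : ℝ) : ℍ) * v i = 0) :
    ∀ i ∈ L', v i = 0 := by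
  intro i₀ hi₀
  set E : ℍ ≃ₗ[ℝ] (Fin 4 → ℝ) := QuaternionAlgebra.linearEquivTuple (-1 : ℝ) (0 : ℝ) (-1 : ℝ) with hE
  have hcomp : ∀ j : Fin 4, E (v i₀) j = 0 := by
    intro j
    refine real_indep L' e he (fun i => E (v i) j) (fun t => ?_) i₀ hi₀
    have h1 := congrArg (fun q => E q j) (hz t)
    simp only [map_zero, Pi.zero_apply] at h1
    rw [← h1]
    rw [show E (∑ i ∈ L', ((∏ h, t h ^ e i h : ℝ) : ℍ) * v i)
        = ∑ i ∈ L', (∏ h, t h ^ e i h) • E (v i) from by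
      rw [map_sum]
      exact Finset.sum_congr rfl fun i _ => by
        rw [Quaternion.coe_mul_eq_smul, map_smul]]
    rw [Finset.sum_apply]
    exact Finset.sum_congr rfl fun i _ => by rw [Pi.smul_apply, smul_eq_mul]
  have : E (v i₀) = 0 := funext hcomp
  simpa using E.map_eq_zero_iff.mp this

end Stmt19Aux

/-- Every nonconstant polynomial function `ℍⁿ → ℍ` has a zero. -/
theorem stmt19 (n : ℕ) (hn : 0 < n) (L : Finset (Fin n → ℕ)) (a : (Fin n → ℕ) → ℍ)
    (f : (Fin n → ℍ) → ℍ) (hf : ∀ x, f x = ∑ ℓ ∈ L, mono ℓ (a ℓ) x)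
    (hnc : ¬ ∃ c : ℍ, ∀ x, f x = c) :
    ∃ x : Fin n → ℍ, f x = 0 := by
  classical
  have hmono0 : ∀ (v : ℍ) (x : Fin n → ℍ), mono 0 v x = v := by
    intro v x
    unfold mono
    rw [show (List.ofFn fun h => x h ^ (0 : Fin n → ℕ) h)
        = List.ofFn (fun _ : Fin n => (1 : ℍ)) from
      congrArg _ (funext fun h => by rw [Pi.zero_apply, pow_zero])]
    simp
  have hex : ∃ ℓ ∈ L, ℓ ≠ 0 ∧ a ℓ ≠ 0 := by
    by_contra hno
    push_neg at hno
    apply hnc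
    refine ⟨∑ ℓ ∈ L, if ℓ = 0 then a ℓ else 0, fun x => ?_⟩
    rw [hf x]
    refine Finset.sum_congr rfl fun ℓ hℓ => ?_
    by_cases h0 : ℓ = 0
    · rw [if_pos h0, h0, hmono0]
    · rw [if_neg h0, hno ℓ hℓ h0]
      unfold mono
      rw [mul_zero]
  obtain ⟨ℓ₀, hℓL, hℓ0, haℓ⟩ := hex
  obtain ⟨k, hk⟩ : ∃ k, ℓ₀ k ≠ 0 := by
    by_contra hall
    push_neg at hall
    exact hℓ0 (funext fun h => hall h)
  have hinj : Set.InjOn (fun ℓ : Fin n → ℕ => Function.update ℓ k 0)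
      (↑(L.filter (fun ℓ => ℓ k = ℓ₀ k)) : Set (Fin n → ℕ)) := by
    intro ℓ₁ h₁ ℓ₂ h₂ hupd
    have e1 : ℓ₁ k = ℓ₀ k := (Finset.mem_filter.mp h₁).2
    have e2 : ℓ₂ k = ℓ₀ k := (Finset.mem_filter.mp h₂).2
    funext h
    by_cases hhk : h = k
    · rw [hhk, e1, e2]
    · have := congrFun hupd h
      simpa only [Function.update_of_ne hhk] using this
  have ht : ∃ t : Fin n → ℝ,
      ∑ ℓ ∈ L.filter (fun ℓ => ℓ k = ℓ₀ k),
        ((∏ h, t h ^ (Function.update ℓ k 0 h) : ℝ) : ℍ) * a ℓ ≠ 0 := by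
    by_contra hno
    push_neg at hno
    exact haℓ (Stmt19Aux.indep (L.filter (fun ℓ => ℓ k = ℓ₀ k))
      (fun ℓ => Function.update ℓ k 0) hinj a hno ℓ₀
      (Finset.mem_filter.mpr ⟨hℓL, rfl⟩))
  obtain ⟨t, ht⟩ := ht
  set D : ℕ := L.sup (fun ℓ => ℓ k) with hD
  set b : ℕ → ℍ := fun m => ∑ ℓ ∈ L.filter (fun ℓ => ℓ k = m),
      ((∏ h, t h ^ (Function.update ℓ k 0 h) : ℝ) : ℍ) * a ℓ with hb
  have hbm₀ : b (ℓ₀ k) ≠ 0 := ht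
  have hm₀D : ℓ₀ k ≤ D := Finset.le_sup (f := fun ℓ => ℓ k) hℓL
  obtain ⟨q, hq⟩ := Stmt19Aux.one_var D b (ℓ₀ k) (Nat.one_le_iff_ne_zero.mpr hk) hm₀D hbm₀
  refine ⟨fun h => if h = k then q else ((t h : ℝ) : ℍ), ?_⟩
  rw [hf]
  set x : Fin n → ℍ := fun h => if h = k then q else ((t h : ℝ) : ℍ) with hx
  have hmono : ∀ ℓ : Fin n → ℕ, mono ℓ (a ℓ) x
      = q ^ (ℓ k) * (((∏ h, t h ^ (Function.update ℓ k 0 h) : ℝ) : ℍ) * a ℓ) := by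
    intro ℓ
    unfold mono
    set s : Fin n → ℝ := fun h => if h = k then 1 else t h ^ ℓ h with hs
    set w : Fin n → ℍ := fun h => if h = k then q ^ ℓ k else 1 with hw
    have hpt : (fun h => x h ^ ℓ h) = fun h => (s h : ℍ) * w h := by
      funext h
      by_cases hhk : h = k
      · subst hhk
        show x h ^ ℓ h = ((if h = h then (1:ℝ) else t h ^ ℓ h : ℝ) : ℍ)
          * (if h = h then q ^ ℓ h else 1)
        rw [if_pos rfl, if_pos rfl, hx]
        show (if h = h then q else ((t h : ℝ) : ℍ)) ^ ℓ h = ((1:ℝ):ℍ) * q ^ ℓ h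
        rw [if_pos rfl, Quaternion.coe_one, one_mul]
      · show x h ^ ℓ h = ((if h = k then (1:ℝ) else t h ^ ℓ h : ℝ) : ℍ)
          * (if h = k then q ^ ℓ k else 1)
        rw [if_neg hhk, if_neg hhk, mul_one, hx]
        show (if h = k then q else ((t h : ℝ) : ℍ)) ^ ℓ h = ((t h ^ ℓ h : ℝ) : ℍ)
        rw [if_neg hhk, Quaternion.coe_pow]
    rw [hpt, Stmt19Aux.all_real_prod n s w,
      Stmt19Aux.one_spot_prod n w k (fun h hh => by rw [hw]; simp [if_neg hh])]
    have hwk : w k = q ^ ℓ k := by rw [hw]; simp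
    have hsprod : (∏ h, s h) = ∏ h, t h ^ (Function.update ℓ k 0 h) := by
      refine Finset.prod_congr rfl fun h _ => ?_
      by_cases hhk : h = k
      · subst hhk
        rw [hs]
        simp
      · rw [hs]
        simp only [if_neg hhk, Function.update_of_ne hhk]
    rw [hwk, hsprod, mul_assoc, ← mul_assoc (_ : ℍ) (q ^ ℓ k) (a ℓ),
      Quaternion.coe_commutes _ (q ^ ℓ k), mul_assoc]
  calc ∑ ℓ ∈ L, mono ℓ (a ℓ) x
      = ∑ m ∈ Finset.range (D + 1), ∑ ℓ ∈ L.filter (fun ℓ => ℓ k = m),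
          mono ℓ (a ℓ) x := by
        refine (Finset.sum_fiberwise_of_maps_to (fun ℓ hℓ => ?_) _).symm
        exact Finset.mem_range.mpr (Nat.lt_succ_of_le (Finset.le_sup (f := fun ℓ => ℓ k) hℓ))
    _ = ∑ m ∈ Finset.range (D + 1), q ^ m * b m := by
        refine Finset.sum_congr rfl fun m _ => ?_
        rw [hb, Finset.mul_sum]
        refine Finset.sum_congr rfl fun ℓ hℓ => ?_
        rw [hmono ℓ, (Finset.mem_filter.mp hℓ).2]
    _ = 0 := hq

end
end
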